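/- arXiv:1109.4041 — 5 statements merged into one kernel-verified Lean document; each statement's English description precedes it below -/
import Mathlib

section
/- Under Assumption 1, if P(F(X) p(X) ≠ 0) > 0, then Q(θ) = E[F²(X) p(X)/p(X−θ)] (a value in [0,∞]) tends to +∞ as |θ| → ∞: for every sequence (θ_n) with |θ_n| → ∞ one has Q(θ_n) → ∞. -/
open MeasureTheory Filter Set
open scoped ENNReal Topology ProbabilityTheory

/-- Under Assumption 1, if `P(F(X) p(X) ≠ 0) > 0`, then `Q(θ) = E[F²(X)p(X)/p(X−θ)] ∈ [0,∞]`
tends to `+∞` along every sequence `(θ_n)` with `|θ_n| → ∞`. -/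
theorem stmt3 {d : ℕ} (hd : 0 < d)
    {Ω : Type*} [MeasureSpace Ω] [IsProbabilityMeasure (ℙ : Measure Ω)]
    (X : Ω → EuclideanSpace ℝ (Fin d)) (hX : Measurable X)
    (p F : EuclideanSpace ℝ (Fin d) → ℝ) (hF : Measurable F)
    (hp_pos : ∀ x, 0 < p x)
    (hdensity : (ℙ : Measure Ω).map X = volume.withDensity (fun x => ENNReal.ofReal (p x)))
    -- Assumption 1
    (hlogconc : StrictConcaveOn ℝ univ (fun x => Real.log (p x)))
    (hvanish : Tendsto p (cocompact (EuclideanSpace ℝ (Fin d))) (𝓝 0))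
    (hFp : 0 < ℙ {ω | F (X ω) * p (X ω) ≠ 0})
    (Q : EuclideanSpace ℝ (Fin d) → ℝ≥0∞)
    (hQ : ∀ θ, Q θ = ∫⁻ ω, ENNReal.ofReal (F (X ω)^2 * p (X ω) / p (X ω - θ)) ∂ℙ) :
    ∀ θn : ℕ → EuclideanSpace ℝ (Fin d),
      Tendsto (fun n => ‖θn n‖) atTop atTop →
      Tendsto (fun n => Q (θn n)) atTop (𝓝 ⊤) := by
  intro θn hθn
  -- p is continuous (hence measurable)
  have hlogcont : Continuous fun x => Real.log (p x) := by
    have := (hlogconc.concaveOn.continuousOn isOpen_univ)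
    exact continuousOn_univ.mp this
  have hpcont : Continuous p := by
    have : p = fun x => Real.exp (Real.log (p x)) := by
      funext x; rw [Real.exp_log (hp_pos x)]
    rw [this]
    exact Real.continuous_exp.comp hlogcont
  have hpm : Measurable p := hpcont.measurable
  -- the sequence of integrands
  set f : ℕ → Ω → ℝ≥0∞ :=
    fun n ω => ENNReal.ofReal (F (X ω)^2 * p (X ω) / p (X ω - θn n)) with hf
  have hfm : ∀ n, Measurable (f n) := by
    intro n
    apply ENNReal.measurable_ofReal.comp
    exact (((hF.comp hX).pow_const 2).mul (hpm.comp hX)).div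
      (hpm.comp ((hX.sub_const (θn n))))
  -- pointwise divergence on the set A
  set A : Set Ω := {ω | F (X ω) * p (X ω) ≠ 0} with hA
  have hAm : MeasurableSet A := by
    exact ((hF.comp hX).mul (hpm.comp hX)) (measurableSet_singleton (0:ℝ)).compl
  have hpt : ∀ ω ∈ A, Tendsto (fun n => f n ω) atTop (𝓝 ⊤) := by
    intro ω hω
    have hFω : F (X ω) ≠ 0 := fun h => hω (by simp [h])
    have hc : 0 < F (X ω)^2 * p (X ω) :=
      mul_pos (pow_pos (abs_pos.mpr hFω) 2 |>.trans_eq (sq_abs _)) (hp_pos _)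
    -- p (X ω - θn n) → 0
    have hdist : Tendsto (fun n => X ω - θn n) atTop (cocompact _) := by
      apply tendsto_cocompact_of_tendsto_dist_comp_atTop (0 : EuclideanSpace ℝ (Fin d))
      simp only [dist_zero_right]
      apply tendsto_atTop_mono (fun n => ?_) (tendsto_atTop_add_const_right _ (-‖X ω‖) hθn)
      have := norm_sub_norm_le (θn n) (X ω)
      rw [norm_sub_rev (θn n)] at this
      linarith
    have hden : Tendsto (fun n => p (X ω - θn n)) atTop (𝓝[>] 0) := by
      apply tendsto_nhdsWithin_of_tendsto_nhds_of_eventually_within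
      · exact hvanish.comp hdist
      · exact Eventually.of_forall fun n => hp_pos _
    have hratio : Tendsto (fun n => F (X ω)^2 * p (X ω) / p (X ω - θn n)) atTop atTop := by
      simp only [div_eq_mul_inv]
      exact Tendsto.const_mul_atTop hc (tendsto_inv_nhdsGT_zero.comp hden)
    exact ENNReal.tendsto_ofReal_atTop.comp hratio
  -- Fatou and conclusion
  have hliminf : (⊤ : ℝ≥0∞) ≤ liminf (fun n => Q (θn n)) atTop := by
    have h1 : (⊤ : ℝ≥0∞) ≤ ∫⁻ ω, liminf (fun n => f n ω) atTop ∂ℙ := by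
      calc (⊤ : ℝ≥0∞) = ⊤ * ℙ A := by rw [ENNReal.top_mul hFp.ne']
        _ = ∫⁻ _ in A, ⊤ ∂ℙ := (setLIntegral_const A ⊤).symm
        _ = ∫⁻ ω in A, liminf (fun n => f n ω) atTop ∂ℙ := by
            refine setLIntegral_congr_fun hAm (fun ω hω => ?_)
            exact ((hpt ω hω).liminf_eq).symm
        _ ≤ _ := setLIntegral_le_lintegral A _
    calc (⊤ : ℝ≥0∞) ≤ ∫⁻ ω, liminf (fun n => f n ω) atTop ∂ℙ := h1
      _ ≤ liminf (fun n => ∫⁻ ω, f n ω ∂ℙ) atTop := lintegral_liminf_le hfm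
      _ = liminf (fun n => Q (θn n)) atTop := by
          simp only [hf, ← hQ]
  rw [ENNReal.tendsto_nhds_top_iff_nnreal]
  intro x
  exact eventually_lt_of_lt_liminf (lt_of_lt_of_le (ENNReal.coe_lt_top) hliminf)
end

section
/- Under Assumptions 1, 2 and 3, for every R > 0 there exists a constant C = C(R) > 0, depending only on R, p, F and the moments of X appearing in Assumption 3 (in particular not on the quantizer), such that for every stationary quantization X̂ of X, sup_{|θ| ≤ R} |Q(θ) − Q̂(θ)| ≤ C ‖X − X̂‖₂, where Q̂(θ) = E[F²(X̂) p(X̂)/p(X̂ − θ)] and ‖Y‖₂ = (E|Y|²)^{1/2}. -/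
open MeasureTheory Filter Set RealInnerProductSpace
open scoped ENNReal NNReal Topology ProbabilityTheory

lemma logp_diff_bound {d : ℕ} (p : EuclideanSpace ℝ (Fin d) → ℝ)
    (hp_pos : ∀ x, 0 < p x) (hp_smooth : ContDiff ℝ 2 p)
    {Cg Rg α : ℝ} (hα : α ∈ Set.Ioc (0:ℝ) 1)
    (hg : ∀ x : EuclideanSpace ℝ (Fin d), Rg ≤ ‖x‖ → ‖gradient p x‖ / p x ≤ Cg * ‖x‖ ^ α) :
    ∃ B : ℝ, 0 < B ∧ ∀ x y : EuclideanSpace ℝ (Fin d),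
      |Real.log (p x) - Real.log (p y)| ≤ B * (1 + ‖x‖ + ‖y‖) * ‖x - y‖ := by
  have hpdiff : Differentiable ℝ p := hp_smooth.differentiable (by norm_num)
  -- global pointwise bound on ‖fderiv p z‖ / p z
  have hcont : ContinuousOn (fun z : EuclideanSpace ℝ (Fin d) => ‖fderiv ℝ p z‖ / p z)
      (Metric.closedBall 0 (max Rg 0)) := by
    apply Continuous.continuousOn
    exact (continuous_norm.comp (hp_smooth.continuous_fderiv (by norm_num))).div
      hp_smooth.continuous (fun z => (hp_pos z).ne')
  obtain ⟨C0, hC0⟩ := (isCompact_closedBall (0 : EuclideanSpace ℝ (Fin d)) (max Rg 0)).exists_bound_of_continuousOn hcont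
  set B : ℝ := |C0| + |Cg| + 1 with hB
  have hBpos : 0 < B := by positivity
  have hgradnorm : ∀ z : EuclideanSpace ℝ (Fin d), ‖gradient p z‖ = ‖fderiv ℝ p z‖ := by
    intro z
    simp [gradient, LinearIsometryEquiv.norm_map]
  have hglobal : ∀ z : EuclideanSpace ℝ (Fin d), ‖fderiv ℝ p z‖ / p z ≤ B * (1 + ‖z‖) := by
    intro z
    rcases le_or_gt Rg ‖z‖ with h | h
    · have h1 := hg z h
      rw [hgradnorm] at h1
      have h2 : ‖z‖ ^ α ≤ 1 + ‖z‖ := by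
        rcases le_or_gt ‖z‖ 1 with hz | hz
        · have := Real.rpow_le_one (norm_nonneg z) hz hα.1.le
          linarith [norm_nonneg z]
        · calc ‖z‖ ^ α ≤ ‖z‖ ^ (1:ℝ) :=
                Real.rpow_le_rpow_of_exponent_le hz.le hα.2
            _ = ‖z‖ := Real.rpow_one _
            _ ≤ 1 + ‖z‖ := by linarith
      calc ‖fderiv ℝ p z‖ / p z ≤ Cg * ‖z‖ ^ α := h1
        _ ≤ |Cg| * (1 + ‖z‖) := by
            have h3 : Cg * ‖z‖ ^ α ≤ |Cg| * ‖z‖ ^ α :=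
              mul_le_mul_of_nonneg_right (le_abs_self Cg) (Real.rpow_nonneg (norm_nonneg z) α)
            have h4 : |Cg| * ‖z‖ ^ α ≤ |Cg| * (1 + ‖z‖) :=
              mul_le_mul_of_nonneg_left h2 (abs_nonneg Cg)
            linarith
        _ ≤ B * (1 + ‖z‖) := by
            apply mul_le_mul_of_nonneg_right _ (by positivity)
            have := abs_nonneg C0
            linarith
    · have hz : z ∈ Metric.closedBall (0 : EuclideanSpace ℝ (Fin d)) (max Rg 0) := by
        simp only [Metric.mem_closedBall, dist_zero_right, le_max_iff]
        left; linarith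
      have h1 := hC0 z hz
      rw [Real.norm_eq_abs] at h1
      have h2 : ‖fderiv ℝ p z‖ / p z ≤ C0 := (le_abs_self _).trans h1
      have h3 : C0 ≤ B * (1 + ‖z‖) := by
        have h4 : C0 ≤ B := by
          have := le_abs_self C0
          have := abs_nonneg Cg
          linarith
        nlinarith [norm_nonneg z, hBpos]
      exact h2.trans h3
  refine ⟨B, hBpos, fun x y => ?_⟩
  -- mean value inequality on the closed ball of radius max ‖x‖ ‖y‖
  set r : ℝ := max ‖x‖ ‖y‖ with hr
  have hLderiv : ∀ z ∈ Metric.closedBall (0 : EuclideanSpace ℝ (Fin d)) r,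
      HasFDerivWithinAt (fun w => Real.log (p w)) ((p z)⁻¹ • fderiv ℝ p z)
        (Metric.closedBall 0 r) z := by
    intro z _
    have h1 : HasFDerivAt p (fderiv ℝ p z) z := (hpdiff z).hasFDerivAt
    have h2 : HasDerivAt Real.log (p z)⁻¹ (p z) := Real.hasDerivAt_log (hp_pos z).ne'
    exact (h2.comp_hasFDerivAt z h1).hasFDerivWithinAt
  have hbound : ∀ z ∈ Metric.closedBall (0 : EuclideanSpace ℝ (Fin d)) r,
      ‖(p z)⁻¹ • fderiv ℝ p z‖ ≤ B * (1 + ‖x‖ + ‖y‖) := by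
    intro z hz
    have hz' : ‖z‖ ≤ r := by simpa [dist_zero_right] using hz
    have h1 : ‖(p z)⁻¹ • fderiv ℝ p z‖ = ‖fderiv ℝ p z‖ / p z := by
      rw [norm_smul, Real.norm_eq_abs, abs_of_pos (inv_pos.2 (hp_pos z))]
      ring
    rw [h1]
    calc ‖fderiv ℝ p z‖ / p z ≤ B * (1 + ‖z‖) := hglobal z
      _ ≤ B * (1 + ‖x‖ + ‖y‖) := by
          apply mul_le_mul_of_nonneg_left _ hBpos.le
          have : r ≤ ‖x‖ + ‖y‖ := by
            simp only [hr, max_le_iff]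
            constructor <;> nlinarith [norm_nonneg x, norm_nonneg y]
          linarith
  have hconv : Convex ℝ (Metric.closedBall (0 : EuclideanSpace ℝ (Fin d)) r) :=
    convex_closedBall _ _
  have hx : x ∈ Metric.closedBall (0 : EuclideanSpace ℝ (Fin d)) r := by
    simp [dist_zero_right, hr]
  have hy : y ∈ Metric.closedBall (0 : EuclideanSpace ℝ (Fin d)) r := by
    simp [dist_zero_right, hr]
  have := hconv.norm_image_sub_le_of_norm_hasFDerivWithin_le hLderiv hbound hy hx
  simpa [Real.norm_eq_abs] using this

lemma exp_prod_bound {a b s t M : ℝ} (ha : 0 ≤ a) (hb : 0 ≤ b)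
    (hsM : 2*s ≤ M) (htM : 2*t ≤ M) :
    Real.exp (s*a) * Real.exp (t*b) ≤ Real.exp (M*a) + Real.exp (M*b) := by
  have h1 : Real.exp (s*a) * Real.exp (t*b)
      ≤ (Real.exp (s*a))^2 / 2 + (Real.exp (t*b))^2 / 2 := by
    nlinarith [sq_nonneg (Real.exp (s*a) - Real.exp (t*b))]
  have h2 : (Real.exp (s*a))^2 = Real.exp (2*s*a) := by
    rw [sq, ← Real.exp_add]; ring_nf
  have h3 : (Real.exp (t*b))^2 = Real.exp (2*t*b) := by
    rw [sq, ← Real.exp_add]; ring_nf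
  have h4 : Real.exp (2*s*a) ≤ Real.exp (M*a) :=
    Real.exp_le_exp.2 (mul_le_mul_of_nonneg_right hsM ha)
  have h5 : Real.exp (2*t*b) ≤ Real.exp (M*b) :=
    Real.exp_le_exp.2 (mul_le_mul_of_nonneg_right htM hb)
  have h6 : 0 < Real.exp (M*a) := Real.exp_pos _
  have h7 : 0 < Real.exp (M*b) := Real.exp_pos _
  rw [h2, h3] at h1
  linarith

lemma abs_exp_sub_exp_le (u v : ℝ) :
    |Real.exp u - Real.exp v| ≤ (Real.exp u + Real.exp v) * |u - v| := by
  have key : ∀ s t : ℝ, t ≤ s →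
      Real.exp s - Real.exp t ≤ (Real.exp s + Real.exp t) * |s - t| := by
    intro s t hts
    have h0 : 0 ≤ s - t := by linarith
    have h1 : 1 - (s - t) ≤ Real.exp (-(s-t)) := by
      have := Real.add_one_le_exp (-(s-t)); linarith
    have h2 : Real.exp s - Real.exp t ≤ (s - t) * Real.exp s := by
      have h3 := mul_le_mul_of_nonneg_left h1 (Real.exp_pos s).le
      rw [← Real.exp_add] at h3
      have h4 : s + -(s-t) = t := by ring
      rw [h4] at h3
      nlinarith [Real.exp_pos s]
    have h5 : |s - t| = s - t := abs_of_nonneg h0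
    nlinarith [Real.exp_pos t, Real.exp_pos s]
  rcases le_total v u with h | h
  · have h1 := key u v h
    have h2 : 0 ≤ Real.exp u - Real.exp v := by
      have := Real.exp_le_exp.2 h; linarith
    rw [abs_of_nonneg h2]; exact h1
  · have h1 := key v u h
    have h2 : 0 ≤ Real.exp v - Real.exp u := by
      have := Real.exp_le_exp.2 h; linarith
    rw [abs_sub_comm, abs_of_nonneg h2, abs_sub_comm, add_comm (Real.exp u)]
    exact h1


private lemma auxsum {F0 K a b ea eb : ℝ} (hF0 : 0 ≤ F0) (hK : 0 ≤ K)
    (h1 : 1 ≤ ea) (h2 : 1 ≤ eb) (h3 : a ≤ ea) (h4 : b ≤ eb) :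
    2*F0 + K*a + K*b ≤ (F0+K) * (ea + eb) := by nlinarith

private lemma auxdistrib {x y z P : ℝ} (hz : 0 ≤ z) (h1 : x*z ≤ P) (h2 : y*z ≤ P) :
    (x+y)*z ≤ 2*P := by nlinarith

private lemma aux5 {F0 K b eb : ℝ} (hF0 : 0 ≤ F0) (hK : 0 ≤ K) (h1 : 1 ≤ eb) (h2 : b ≤ eb) :
    F0 + K*b ≤ (F0+K) * eb := by nlinarith

private lemma aux9 {R ta tb e : ℝ} (hR : 0 < R) (h1 : 1 + ta + tb ≤ e) (h2 : 1 ≤ e) :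
    1+R+ta+tb ≤ (1+R)*e := by nlinarith

lemma phi_real_combination
    {a b D u v Fx Fy c M₁ M K F0 R B : ℝ}
    (ha : 0 ≤ a) (hb : 0 ≤ b) (hD : 0 ≤ D) (hK : 0 ≤ K) (hF0 : 0 ≤ F0)
    (hB : 0 < B) (hR : 0 < R) (hM₁nn : 0 ≤ M₁)
    (hM6 : 6 ≤ M) (hMM : 2*(M₁+3) ≤ M)
    (hexpu : Real.exp u ≤ Real.exp c * Real.exp (M₁ * a))
    (hexpv : Real.exp v ≤ Real.exp c * Real.exp (M₁ * b))
    (huv : |u - v| ≤ 2*B*(1+R+a+b) * D)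
    (hFsq : |Fx^2 - Fy^2| ≤ K * D * (2*F0 + K*a + K*b))
    (hFynn : 0 ≤ Fy) (hFy : Fy ≤ F0 + K*b) :
    |Fx^2 * Real.exp u - Fy^2 * Real.exp v|
      ≤ (2*K*Real.exp c*(F0+K) + 4*B*Real.exp c*(1+R)*(F0+K)^2) *
        ((Real.exp (M*a) + Real.exp (M*b)) * D) := by
  have hA₁pos : 0 < Real.exp c := Real.exp_pos _
  set A₁ := Real.exp c
  have hPpos : 0 < Real.exp (M*a) + Real.exp (M*b) := by positivity
  set P := Real.exp (M*a) + Real.exp (M*b) with hP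
  have hsplit : |Fx ^ 2 * Real.exp u - Fy ^ 2 * Real.exp v|
      ≤ |Fx ^ 2 - Fy ^ 2| * Real.exp u + Fy ^ 2 * |Real.exp u - Real.exp v| := by
    have h1 : Fx ^ 2 * Real.exp u - Fy ^ 2 * Real.exp v
        = (Fx ^ 2 - Fy ^ 2) * Real.exp u + Fy ^ 2 * (Real.exp u - Real.exp v) := by ring
    rw [h1]
    calc |(Fx ^ 2 - Fy ^ 2) * Real.exp u + Fy ^ 2 * (Real.exp u - Real.exp v)|
        ≤ |(Fx ^ 2 - Fy ^ 2) * Real.exp u| + |Fy ^ 2 * (Real.exp u - Real.exp v)| :=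
          abs_add_le _ _
      _ = |Fx ^ 2 - Fy ^ 2| * Real.exp u + Fy ^ 2 * |Real.exp u - Real.exp v| := by
          rw [abs_mul, abs_mul, abs_of_pos (Real.exp_pos u), abs_of_nonneg (sq_nonneg Fy)]
  have h1exp : ∀ t : ℝ, 0 ≤ t → 1 ≤ Real.exp t := fun t ht => Real.one_le_exp ht
  have htexp : ∀ t : ℝ, 0 ≤ t → t ≤ Real.exp t := fun t ht => by
    have := Real.add_one_le_exp t; linarith
  -- Term 1 bound
  have hT1 : |Fx ^ 2 - Fy ^ 2| * Real.exp u ≤ (2*K*A₁*(F0+K)) * (P * D) := by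
    have step1 : |Fx ^ 2 - Fy ^ 2| * Real.exp u
        ≤ (K * D * (2*F0 + K*a + K*b)) * (A₁ * Real.exp (M₁ * a)) := by
      apply mul_le_mul hFsq hexpu (Real.exp_pos u).le
      positivity
    have step2 : (2*F0 + K*a + K*b) * Real.exp (M₁ * a) ≤ (F0+K) * (2*P) := by
      have hea : 1 ≤ Real.exp a := h1exp a ha
      have heb : 1 ≤ Real.exp b := h1exp b hb
      have haea : a ≤ Real.exp a := htexp a ha
      have hbeb : b ≤ Real.exp b := htexp b hb
      have hsum : 2*F0 + K*a + K*b ≤ (F0+K) * (Real.exp a + Real.exp b) :=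
        auxsum hF0 hK hea heb haea hbeb
      have hprod : (Real.exp a + Real.exp b) * Real.exp (M₁ * a) ≤ 2 * P := by
        have hp1 : Real.exp a * Real.exp (M₁ * a) ≤ P := by
          have heq : Real.exp a * Real.exp (M₁ * a) = Real.exp ((M₁+1) * a) := by
            rw [← Real.exp_add]; ring_nf
          rw [heq, hP]
          have h11 : Real.exp ((M₁+1)*a) ≤ Real.exp (M*a) := by
            apply Real.exp_le_exp.2
            apply mul_le_mul_of_nonneg_right _ ha
            linarith
          linarith [Real.exp_pos (M*b)]
        have hp2 : Real.exp b * Real.exp (M₁ * a) ≤ P := by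
          have heq : Real.exp b * Real.exp (M₁ * a) = Real.exp (M₁ * a) * Real.exp (1 * b) := by
            rw [one_mul]; ring
          rw [heq, hP]
          exact exp_prod_bound ha hb (by linarith) (by linarith)
        exact auxdistrib (Real.exp_pos (M₁ * a)).le hp1 hp2
      calc (2*F0 + K*a + K*b) * Real.exp (M₁ * a)
          ≤ ((F0+K) * (Real.exp a + Real.exp b)) * Real.exp (M₁ * a) := by
            apply mul_le_mul_of_nonneg_right hsum (Real.exp_pos _).le
        _ = (F0+K) * ((Real.exp a + Real.exp b) * Real.exp (M₁ * a)) := by ring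
        _ ≤ (F0+K) * (2 * P) := by
            apply mul_le_mul_of_nonneg_left hprod (by positivity)
    calc |Fx ^ 2 - Fy ^ 2| * Real.exp u
        ≤ (K * D * (2*F0 + K*a + K*b)) * (A₁ * Real.exp (M₁ * a)) := step1
      _ = (K * A₁ * D) * ((2*F0 + K*a + K*b) * Real.exp (M₁ * a)) := by ring
      _ ≤ (K * A₁ * D) * ((F0+K) * (2*P)) := by
          apply mul_le_mul_of_nonneg_left step2 (by positivity)
      _ = (2*K*A₁*(F0+K)) * (P * D) := by ring
  -- Term 2 bound
  have hT2 : Fy ^ 2 * |Real.exp u - Real.exp v| ≤ (4*B*A₁*(1+R)*(F0+K)^2) * (P * D) := by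
    have step1 : Fy ^ 2 * |Real.exp u - Real.exp v|
        ≤ (F0 + K*b)^2 * ((A₁ * (Real.exp (M₁*a) + Real.exp (M₁*b))) * (2*B*(1+R+a+b) * D)) := by
      have h2 : |Real.exp u - Real.exp v| ≤ (Real.exp u + Real.exp v) * |u - v| :=
        abs_exp_sub_exp_le u v
      have h3 : (Real.exp u + Real.exp v) * |u - v|
          ≤ (A₁ * (Real.exp (M₁*a) + Real.exp (M₁*b))) * (2*B*(1+R+a+b) * D) := by
        apply mul_le_mul _ huv (abs_nonneg _) (by positivity)
        calc Real.exp u + Real.exp v ≤ A₁ * Real.exp (M₁*a) + A₁ * Real.exp (M₁*b) := by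
              linarith
          _ = A₁ * (Real.exp (M₁*a) + Real.exp (M₁*b)) := by ring
      have h4 : Fy ^ 2 ≤ (F0 + K*b)^2 := pow_le_pow_left₀ hFynn hFy 2
      calc Fy ^ 2 * |Real.exp u - Real.exp v|
          ≤ (F0 + K*b)^2 * |Real.exp u - Real.exp v| :=
            mul_le_mul_of_nonneg_right h4 (abs_nonneg _)
        _ ≤ (F0 + K*b)^2 * ((A₁ * (Real.exp (M₁*a) + Real.exp (M₁*b))) * (2*B*(1+R+a+b) * D)) := by
            apply mul_le_mul_of_nonneg_left (h2.trans h3) (by positivity)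
    have step2 : (F0 + K*b)^2 * ((1+R+a+b) * (Real.exp (M₁*a) + Real.exp (M₁*b)))
        ≤ (F0+K)^2 * ((1+R) * (2 * P)) := by
      have hea : 1 ≤ Real.exp a := h1exp a ha
      have heb : 1 ≤ Real.exp b := h1exp b hb
      have hbeb : b ≤ Real.exp b := htexp b hb
      have h5 : F0 + K*b ≤ (F0+K) * Real.exp b := aux5 hF0 hK heb hbeb
      have h6 : (F0+K*b)^2 ≤ (F0+K)^2 * Real.exp (2*b) := by
        have h8 : 0 ≤ F0 + K*b := by positivity
        have h7 : (F0+K*b)^2 ≤ ((F0+K) * Real.exp b)^2 := pow_le_pow_left₀ h8 h5 2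
        have h7' : ((F0+K) * Real.exp b)^2 = (F0+K)^2 * Real.exp (2*b) := by
          rw [mul_pow, sq (Real.exp b), ← Real.exp_add]; ring_nf
        rw [← h7']; exact h7
      have h9 : (1+R+a+b) ≤ (1+R) * Real.exp (a+b) := by
        have h10 := Real.add_one_le_exp (a+b)
        have h11 : 1 ≤ Real.exp (a+b) := h1exp _ (by positivity)
        exact aux9 hR (by linarith) h11
      have h12 : (1+R+a+b) * (Real.exp (M₁*a) + Real.exp (M₁*b))
          ≤ ((1+R) * Real.exp (a+b)) * (Real.exp (M₁*a) + Real.exp (M₁*b)) := by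
        apply mul_le_mul_of_nonneg_right h9 (by positivity)
      have h13 : (F0 + K*b)^2 * ((1+R+a+b) * (Real.exp (M₁*a) + Real.exp (M₁*b)))
          ≤ ((F0+K)^2 * Real.exp (2*b)) *
            (((1+R) * Real.exp (a+b)) * (Real.exp (M₁*a) + Real.exp (M₁*b))) := by
        apply mul_le_mul h6 h12 (by positivity) (by positivity)
      have hb1 : Real.exp ((M₁+1)*a) * Real.exp (3*b) ≤ P := by
        rw [hP]
        exact exp_prod_bound ha hb (by linarith) (by linarith)
      have hb2 : Real.exp (1*a) * Real.exp ((M₁+3)*b) ≤ P := by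
        rw [hP]
        exact exp_prod_bound ha hb (by linarith) (by linarith)
      have hsplit14a : Real.exp ((M₁+1)*a) * Real.exp (3*b)
          = Real.exp (2*b) * (Real.exp (a+b) * Real.exp (M₁*a)) := by
        simp only [← Real.exp_add]; ring_nf
      have hsplit14b : Real.exp (1*a) * Real.exp ((M₁+3)*b)
          = Real.exp (2*b) * (Real.exp (a+b) * Real.exp (M₁*b)) := by
        simp only [← Real.exp_add]; ring_nf
      have h14 : ((F0+K)^2 * Real.exp (2*b)) *
            (((1+R) * Real.exp (a+b)) * (Real.exp (M₁*a) + Real.exp (M₁*b)))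
          = ((F0+K)^2 * (1+R)) *
            (Real.exp ((M₁+1)*a) * Real.exp (3*b) + Real.exp (1*a) * Real.exp ((M₁+3)*b)) := by
        rw [hsplit14a, hsplit14b]; ring
      have h15 : ((F0+K)^2 * (1+R)) *
            (Real.exp ((M₁+1)*a) * Real.exp (3*b) + Real.exp (1*a) * Real.exp ((M₁+3)*b))
          ≤ ((F0+K)^2 * (1+R)) * (P + P) := by
        apply mul_le_mul_of_nonneg_left (add_le_add hb1 hb2) (by positivity)
      calc (F0 + K*b)^2 * ((1+R+a+b) * (Real.exp (M₁*a) + Real.exp (M₁*b)))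
          ≤ ((F0+K)^2 * Real.exp (2*b)) *
            (((1+R) * Real.exp (a+b)) * (Real.exp (M₁*a) + Real.exp (M₁*b))) := h13
        _ = ((F0+K)^2 * (1+R)) *
            (Real.exp ((M₁+1)*a) * Real.exp (3*b) + Real.exp (1*a) * Real.exp ((M₁+3)*b)) := h14
        _ ≤ ((F0+K)^2 * (1+R)) * (P + P) := h15
        _ = (F0+K)^2 * ((1+R) * (2 * P)) := by ring
    calc Fy ^ 2 * |Real.exp u - Real.exp v|
        ≤ (F0 + K*b)^2 * ((A₁ * (Real.exp (M₁*a) + Real.exp (M₁*b))) * (2*B*(1+R+a+b) * D)) :=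
          step1
      _ = (2*B*A₁*D) * ((F0 + K*b)^2 * ((1+R+a+b) * (Real.exp (M₁*a) + Real.exp (M₁*b)))) := by
          ring
      _ ≤ (2*B*A₁*D) * ((F0+K)^2 * ((1+R) * (2 * P))) := by
          apply mul_le_mul_of_nonneg_left step2 (by positivity)
      _ = (4*B*A₁*(1+R)*(F0+K)^2) * (P * D) := by ring
  calc |Fx ^ 2 * Real.exp u - Fy ^ 2 * Real.exp v|
      ≤ |Fx ^ 2 - Fy ^ 2| * Real.exp u + Fy ^ 2 * |Real.exp u - Real.exp v| := hsplit
    _ ≤ (2*K*A₁*(F0+K)) * (P * D) + (4*B*A₁*(1+R)*(F0+K)^2) * (P * D) := add_le_add hT1 hT2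
    _ = (2*K*A₁*(F0+K) + 4*B*A₁*(1+R)*(F0+K)^2) * (P * D) := by ring

lemma pointwise_phi_bound {E : Type*} [NormedAddCommGroup E] [NormedSpace ℝ E]
    (L Fn : E → ℝ) (B R K F0 : ℝ) (hB : 0 < B) (hR : 0 < R) (hK : 0 ≤ K) (hF0 : 0 ≤ F0)
    (hL : ∀ x y : E, |L x - L y| ≤ B * (1 + ‖x‖ + ‖y‖) * ‖x - y‖)
    (hFnn : ∀ z, 0 ≤ Fn z) (hFub : ∀ z : E, Fn z ≤ F0 + K * ‖z‖)
    (hFlip : ∀ x y : E, |Fn x - Fn y| ≤ K * ‖x - y‖)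
    (θ : E) (hθ : ‖θ‖ ≤ R) (x y : E) :
    |Fn x ^ 2 * Real.exp (L x - L (x - θ)) - Fn y ^ 2 * Real.exp (L y - L (y - θ))|
      ≤ (2*K*Real.exp (B*R*(1+R))*(F0+K) + 4*B*Real.exp (B*R*(1+R))*(1+R)*(F0+K)^2) *
        ((Real.exp ((4*B*R+6) * ‖x‖) + Real.exp ((4*B*R+6) * ‖y‖)) * ‖x - y‖) := by
  have ha : 0 ≤ ‖x‖ := norm_nonneg x
  have hb : 0 ≤ ‖y‖ := norm_nonneg y
  have hθnn : 0 ≤ ‖θ‖ := norm_nonneg θ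
  have hBR : 0 < B*R := mul_pos hB hR
  -- bound on |u|
  have hub : ∀ z : E, |L z - L (z - θ)| ≤ B*R*(1+R) + (2*B*R)*‖z‖ := by
    intro z
    have h1 := hL z (z - θ)
    rw [sub_sub_cancel] at h1
    have hzθ : ‖z - θ‖ ≤ ‖z‖ + R := by
      calc ‖z - θ‖ ≤ ‖z‖ + ‖θ‖ := norm_sub_le z θ
        _ ≤ ‖z‖ + R := by linarith
    have h2 : (1 + ‖z‖ + ‖z - θ‖) * ‖θ‖ ≤ (1 + 2*‖z‖ + R) * R := by
      apply mul_le_mul (by linarith) hθ hθnn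
      have := norm_nonneg z; positivity
    have h3 : B * (1 + ‖z‖ + ‖z - θ‖) * ‖θ‖ ≤ B * (1 + 2*‖z‖ + R) * R := by
      rw [mul_assoc, mul_assoc]
      exact mul_le_mul_of_nonneg_left h2 hB.le
    calc |L z - L (z - θ)| ≤ B * (1 + ‖z‖ + ‖z - θ‖) * ‖θ‖ := h1
      _ ≤ B * (1 + 2*‖z‖ + R) * R := h3
      _ = B*R*(1+R) + (2*B*R)*‖z‖ := by ring
  have hexpu : Real.exp (L x - L (x - θ))
      ≤ Real.exp (B*R*(1+R)) * Real.exp ((2*B*R) * ‖x‖) := by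
    calc Real.exp (L x - L (x - θ)) ≤ Real.exp |L x - L (x - θ)| :=
          Real.exp_le_exp.2 (le_abs_self _)
      _ ≤ Real.exp (B*R*(1+R) + (2*B*R)*‖x‖) := Real.exp_le_exp.2 (hub x)
      _ = Real.exp (B*R*(1+R)) * Real.exp ((2*B*R) * ‖x‖) := by rw [← Real.exp_add]
  have hexpv : Real.exp (L y - L (y - θ))
      ≤ Real.exp (B*R*(1+R)) * Real.exp ((2*B*R) * ‖y‖) := by
    calc Real.exp (L y - L (y - θ)) ≤ Real.exp |L y - L (y - θ)| :=
          Real.exp_le_exp.2 (le_abs_self _)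
      _ ≤ Real.exp (B*R*(1+R) + (2*B*R)*‖y‖) := Real.exp_le_exp.2 (hub y)
      _ = Real.exp (B*R*(1+R)) * Real.exp ((2*B*R) * ‖y‖) := by rw [← Real.exp_add]
  -- bound on |u - v|
  have huv : |(L x - L (x - θ)) - (L y - L (y - θ))| ≤ 2*B*(1+R+‖x‖+‖y‖) * ‖x - y‖ := by
    have h1 := hL x y
    have h2 := hL (x - θ) (y - θ)
    have h3 : (x - θ) - (y - θ) = x - y := by abel
    rw [h3] at h2
    have hxθ : ‖x - θ‖ ≤ ‖x‖ + R := by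
      calc ‖x - θ‖ ≤ ‖x‖ + ‖θ‖ := norm_sub_le x θ
        _ ≤ ‖x‖ + R := by linarith
    have hyθ : ‖y - θ‖ ≤ ‖y‖ + R := by
      calc ‖y - θ‖ ≤ ‖y‖ + ‖θ‖ := norm_sub_le y θ
        _ ≤ ‖y‖ + R := by linarith
    have h4 : |(L x - L (x - θ)) - (L y - L (y - θ))|
        ≤ |L x - L y| + |L (x-θ) - L (y-θ)| := by
      have h5 : L x - L (x-θ) - (L y - L (y-θ)) = (L x - L y) - (L (x-θ) - L (y-θ)) := by ring
      rw [h5]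
      exact abs_sub _ _
    have h6 : B * (1 + ‖x-θ‖ + ‖y-θ‖) * ‖x - y‖ ≤ B * (1 + ‖x‖ + R + (‖y‖ + R)) * ‖x - y‖ := by
      have h7 : (0:ℝ) ≤ B * ‖x - y‖ := by positivity
      have h8 : 1 + ‖x-θ‖ + ‖y-θ‖ ≤ 1 + ‖x‖ + R + (‖y‖ + R) := by linarith
      calc B * (1 + ‖x-θ‖ + ‖y-θ‖) * ‖x - y‖ = (B * ‖x - y‖) * (1 + ‖x-θ‖ + ‖y-θ‖) := by ring
        _ ≤ (B * ‖x - y‖) * (1 + ‖x‖ + R + (‖y‖ + R)) := mul_le_mul_of_nonneg_left h8 h7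
        _ = B * (1 + ‖x‖ + R + (‖y‖ + R)) * ‖x - y‖ := by ring
    calc |(L x - L (x - θ)) - (L y - L (y - θ))|
        ≤ |L x - L y| + |L (x-θ) - L (y-θ)| := h4
      _ ≤ B * (1 + ‖x‖ + ‖y‖) * ‖x - y‖ + B * (1 + ‖x‖ + R + (‖y‖ + R)) * ‖x - y‖ := by
          linarith [h2.trans h6]
      _ = 2*B*(1+R+‖x‖+‖y‖) * ‖x - y‖ := by ring
  -- F bound
  have hFsq : |Fn x ^ 2 - Fn y ^ 2| ≤ K * ‖x - y‖ * (2*F0 + K*‖x‖ + K*‖y‖) := by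
    have h1 : Fn x ^ 2 - Fn y ^ 2 = (Fn x - Fn y) * (Fn x + Fn y) := by ring
    rw [h1, abs_mul]
    have h2 : |Fn x + Fn y| = Fn x + Fn y :=
      abs_of_nonneg (by linarith [hFnn x, hFnn y])
    rw [h2]
    have h3 := hFlip x y
    have h4 : Fn x + Fn y ≤ 2*F0 + K*‖x‖ + K*‖y‖ := by linarith [hFub x, hFub y]
    have h5 : 0 ≤ Fn x + Fn y := by linarith [hFnn x, hFnn y]
    calc |Fn x - Fn y| * (Fn x + Fn y) ≤ (K * ‖x - y‖) * (Fn x + Fn y) :=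
          mul_le_mul_of_nonneg_right h3 h5
      _ ≤ (K * ‖x - y‖) * (2*F0 + K*‖x‖ + K*‖y‖) := by
          apply mul_le_mul_of_nonneg_left h4 (by positivity)
      _ = K * ‖x - y‖ * (2*F0 + K*‖x‖ + K*‖y‖) := by ring
  exact phi_real_combination ha hb (norm_nonneg (x - y)) hK hF0 hB hR (by positivity)
    (by linarith [hBR]) (by linarith [hBR])
    hexpu hexpv huv hFsq (hFnn y) (hFub y)

lemma quantizer_jensen {Ω : Type*} [MeasureSpace Ω] [IsProbabilityMeasure (ℙ : Measure Ω)]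
    {d : ℕ} (X Xh : Ω → EuclideanSpace ℝ (Fin d))
    (hXh : Measurable Xh) (hfin : (Set.range Xh).Finite)
    (hstat : (ℙ : Measure Ω)[X | MeasurableSpace.comap Xh inferInstance]
      =ᵐ[(ℙ : Measure Ω)] Xh)
    (hXint : Integrable X ℙ)
    (G : EuclideanSpace ℝ (Fin d) → ℝ) (hGconv : ConvexOn ℝ univ G)
    (hGcont : Continuous G) (hGnn : ∀ x, 0 ≤ G x)
    (hGXint : Integrable (fun ω => G (X ω)) ℙ) :
    ∫ ω, G (Xh ω) ∂ℙ ≤ ∫ ω, G (X ω) ∂ℙ := by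
  have hm : MeasurableSpace.comap Xh inferInstance
      ≤ (MeasureSpace.toMeasurableSpace : MeasurableSpace Ω) := hXh.comap_le
  haveI : SigmaFinite (Measure.trim (ℙ : Measure Ω) hm) := by
    haveI := MeasureTheory.isFiniteMeasure_trim (μ := (ℙ : Measure Ω)) hm
    infer_instance
  classical
  set S : Finset (EuclideanSpace ℝ (Fin d)) := hfin.toFinset with hSdef
  set A : EuclideanSpace ℝ (Fin d) → Set Ω := fun c => Xh ⁻¹' {c} with hAdef
  have hAmeas : ∀ c, MeasurableSet (A c) := fun c => hXh (measurableSet_singleton c)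
  have hAm : ∀ c, MeasurableSet[MeasurableSpace.comap Xh inferInstance] (A c) := fun c =>
    ⟨{c}, measurableSet_singleton c, rfl⟩
  have hcover : (⋃ c ∈ S, A c) = univ := by
    ext ω
    simp only [mem_iUnion, mem_univ, iff_true, hAdef, mem_preimage, mem_singleton_iff]
    exact ⟨Xh ω, by simp [hSdef, Set.Finite.mem_toFinset], rfl⟩
  have hdisj : (↑S : Set (EuclideanSpace ℝ (Fin d))).Pairwise (Function.onFun Disjoint A) := by
    intro c₁ _ c₂ _ hne
    simp only [Function.onFun, hAdef]
    apply Set.disjoint_left.2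
    intro ω h1 h2
    simp only [mem_preimage, mem_singleton_iff] at h1 h2
    exact hne (h1 ▸ h2 ▸ rfl)
  -- integrability of G ∘ Xh
  have hGXh_int : Integrable (fun ω => G (Xh ω)) ℙ := by
    obtain ⟨Cb, hCb⟩ := ((hfin.image fun c => |G c|)).bddAbove
    apply Integrable.mono' (integrable_const Cb)
      ((hGcont.measurable.comp hXh).aestronglyMeasurable)
    filter_upwards with ω
    rw [Real.norm_eq_abs]
    exact hCb ⟨Xh ω, ⟨ω, rfl⟩, rfl⟩
  -- key atomwise inequality
  have key : ∀ c ∈ S, ∫ ω in A c, G (Xh ω) ∂ℙ ≤ ∫ ω in A c, G (X ω) ∂ℙ := by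
    intro c _
    have hXhc : ∫ ω in A c, G (Xh ω) ∂ℙ = (ℙ (A c)).toReal • G c := by
      rw [setIntegral_congr_fun (hAmeas c) (g := fun _ => G c) ?_, setIntegral_const, measureReal_def]
      intro ω hω
      simp only [hAdef, mem_preimage, mem_singleton_iff] at hω
      simp [hω]
    rcases eq_or_ne (ℙ (A c)) 0 with hzero | hpos
    · rw [hXhc, hzero]
      simp only [ENNReal.toReal_zero, zero_smul]
      exact setIntegral_nonneg (hAmeas c) fun ω _ => hGnn _
    · -- c is the average of X over A c
      have hXc : ∫ ω in A c, X ω ∂ℙ = (ℙ (A c)).toReal • c := by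
        have h1 : ∫ ω in A c, X ω ∂ℙ
            = ∫ ω in A c, ((ℙ : Measure Ω)[X | MeasurableSpace.comap Xh inferInstance]) ω ∂ℙ :=
          (setIntegral_condExp hm hXint (hAm c)).symm
        have h2 : ∫ ω in A c, ((ℙ : Measure Ω)[X | MeasurableSpace.comap Xh inferInstance]) ω ∂ℙ
            = ∫ ω in A c, Xh ω ∂ℙ :=
          setIntegral_congr_ae (hAmeas c) (hstat.mono fun ω hω _ => hω)
        have h3 : ∫ ω in A c, Xh ω ∂ℙ = (ℙ (A c)).toReal • c := by
          rw [setIntegral_congr_fun (hAmeas c) (g := fun _ => c) ?_, setIntegral_const, measureReal_def]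
          intro ω hω
          simp only [hAdef, mem_preimage, mem_singleton_iff] at hω
          simp [hω]
        rw [h1, h2, h3]
      have htR : (ℙ (A c)).toReal ≠ 0 := by
        simp [ENNReal.toReal_eq_zero_iff, hpos, measure_ne_top]
      have havg : (⨍ ω in A c, X ω ∂ℙ) = c := by
        rw [setAverage_eq, measureReal_def, hXc, smul_smul, inv_mul_cancel₀ htR, one_smul]
      haveI : NeZero ((ℙ : Measure Ω).restrict (A c)) :=
        ⟨by simpa [Measure.restrict_eq_zero] using hpos⟩
      have hjen : G (⨍ ω in A c, X ω ∂ℙ) ≤ ⨍ ω in A c, G (X ω) ∂ℙ :=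
        hGconv.map_average_le hGcont.continuousOn isClosed_univ
          (Filter.Eventually.of_forall fun _ => mem_univ _)
          (hXint.restrict) (hGXint.restrict)
      rw [havg] at hjen
      have h4 : ⨍ ω in A c, G (X ω) ∂ℙ = (ℙ (A c)).toReal⁻¹ • ∫ ω in A c, G (X ω) ∂ℙ :=
        setAverage_eq _ _ _
      rw [hXhc]
      have h5 : (ℙ (A c)).toReal • G c ≤ (ℙ (A c)).toReal • (⨍ ω in A c, G (X ω) ∂ℙ) := by
        apply smul_le_smul_of_nonneg_left hjen ENNReal.toReal_nonneg
      calc (ℙ (A c)).toReal • G c ≤ (ℙ (A c)).toReal • (⨍ ω in A c, G (X ω) ∂ℙ) := h5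
        _ = ∫ ω in A c, G (X ω) ∂ℙ := by
            rw [h4, smul_smul, mul_inv_cancel₀ htR, one_smul]
  -- sum over the partition
  have hsum1 : ∫ ω, G (Xh ω) ∂ℙ = ∑ c ∈ S, ∫ ω in A c, G (Xh ω) ∂ℙ := by
    rw [← integral_biUnion_finset S (fun c _ => hAmeas c) hdisj
      (fun c _ => hGXh_int.integrableOn), hcover, setIntegral_univ]
  have hsum2 : ∫ ω, G (X ω) ∂ℙ = ∑ c ∈ S, ∫ ω in A c, G (X ω) ∂ℙ := by
    rw [← integral_biUnion_finset S (fun c _ => hAmeas c) hdisj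
      (fun c _ => hGXint.integrableOn), hcover, setIntegral_univ]
  rw [hsum1, hsum2]
  exact Finset.sum_le_sum key

private lemma aux_prod_sq {x y : ℝ} (hx : 0 ≤ x) (hy : 0 ≤ y) : x*y ≤ (x^2+y^2)/2 := by
  nlinarith [sq_nonneg (x-y)]

private lemma exp_sq' (s : ℝ) : (Real.exp s)^2 = Real.exp (2*s) := by
  rw [sq, ← Real.exp_add]; ring_nf

private lemma aux_g1sq (M tX tH : ℝ) :
    (Real.exp (M*tX) + Real.exp (M*tH))^2 ≤ 2*Real.exp (2*M*tX) + 2*Real.exp (2*M*tH) := by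
  have h1 := exp_sq' (M*tX)
  have h2 := exp_sq' (M*tH)
  have h3 : Real.exp (2*(M*tX)) = Real.exp (2*M*tX) := by rw [mul_assoc]
  have h4 : Real.exp (2*(M*tH)) = Real.exp (2*M*tH) := by rw [mul_assoc]
  nlinarith [sq_nonneg (Real.exp (M*tX) - Real.exp (M*tH)), Real.exp_pos (M*tX),
    Real.exp_pos (M*tH)]

private lemma sq_le_four_mul_exp {t : ℝ} (ht : 0 ≤ t) : t^2 ≤ 4*Real.exp t := by
  have h1 := Real.add_one_le_exp (t/2)
  have h2 : (t/2+1)^2 ≤ (Real.exp (t/2))^2 := by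
    apply pow_le_pow_left₀ (by linarith) h1
  have h3 : (Real.exp (t/2))^2 = Real.exp t := by
    rw [sq, ← Real.exp_add]; ring_nf
  nlinarith

private lemma exp_norm_convexOn {E : Type*} [NormedAddCommGroup E] [NormedSpace ℝ E]
    {c : ℝ} (hc : 0 ≤ c) : ConvexOn ℝ univ (fun z : E => Real.exp (c*‖z‖)) := by
  refine ⟨convex_univ, fun x _ y _ s t hs ht hst => ?_⟩
  simp only [smul_eq_mul]
  have h1 : ‖s • x + t • y‖ ≤ s*‖x‖ + t*‖y‖ := by
    calc ‖s • x + t • y‖ ≤ ‖s • x‖ + ‖t • y‖ := norm_add_le _ _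
      _ = s*‖x‖ + t*‖y‖ := by
          rw [norm_smul, norm_smul, Real.norm_eq_abs, Real.norm_eq_abs,
            abs_of_nonneg hs, abs_of_nonneg ht]
  calc Real.exp (c*‖s • x + t • y‖) ≤ Real.exp (c*(s*‖x‖ + t*‖y‖)) :=
        Real.exp_le_exp.2 (mul_le_mul_of_nonneg_left h1 hc)
    _ = Real.exp (s*(c*‖x‖) + t*(c*‖y‖)) := by ring_nf
    _ ≤ s*Real.exp (c*‖x‖) + t*Real.exp (c*‖y‖) := by
        have := convexOn_exp.2 (mem_univ (c*‖x‖)) (mem_univ (c*‖y‖)) hs ht hst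
        simpa [smul_eq_mul] using this

/-- Under Assumptions 1, 2 and 3, for every `R > 0` there is a constant `C > 0` (independent
of the quantizer) such that for every stationary quantization `X̂` of `X`,
`sup_{|θ|≤R} |Q(θ) − Q̂(θ)| ≤ C ‖X − X̂‖₂`, where `Q̂(θ) = E[F²(X̂)p(X̂)/p(X̂−θ)]`. -/
theorem stmt7 {d : ℕ} (hd : 0 < d)
    {Ω : Type*} [MeasureSpace Ω] [IsProbabilityMeasure (ℙ : Measure Ω)]
    (X : Ω → EuclideanSpace ℝ (Fin d)) (hX : Measurable X)
    (p F : EuclideanSpace ℝ (Fin d) → ℝ) (hF : Measurable F)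
    (hp_pos : ∀ x, 0 < p x)
    (hdensity : (ℙ : Measure Ω).map X = volume.withDensity (fun x => ENNReal.ofReal (p x)))
    -- Assumption 1
    (hlogconc : StrictConcaveOn ℝ univ (fun x => Real.log (p x)))
    (hvanish : Tendsto p (cocompact (EuclideanSpace ℝ (Fin d))) (𝓝 0))
    -- Assumption 2
    {α : ℝ} (hα : α ∈ Ioc (0:ℝ) 1)
    (hp_smooth : ContDiff ℝ 2 p)
    (hgrowth1 : ∃ C R : ℝ, 0 < C ∧ ∀ x : EuclideanSpace ℝ (Fin d), R ≤ ‖x‖ →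
      ‖gradient p x‖ / p x ≤ C * ‖x‖ ^ α)
    (hgrowth2 : ∃ C : ℝ, 0 < C ∧ ∀ x : EuclideanSpace ℝ (Fin d), x ≠ 0 →
      ‖fderiv ℝ (fun y => gradient p y) x‖ / p x ≤ C * (‖x‖ ^ (2*α) + ‖x‖ ^ (α - 1)))
    -- Assumption 3
    (hFpos : ∀ x, 0 ≤ F x)
    (hFconv : ConvexOn ℝ univ F)
    (hFLip : ∃ K : ℝ≥0, LipschitzWith K F)
    (hmoments : ∃ a : ℝ, 1 < a ∧ Integrable (fun ω => F (X ω) ^ (4*a)) ℙ ∧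
      ∀ M > (0:ℝ),
        Integrable (fun ω => ‖X ω‖ ^ (4*a/(a-1)) + Real.exp (M * ‖X ω‖)) ℙ)
    -- Q, assumed finite everywhere
    (hint1 : ∀ θ : EuclideanSpace ℝ (Fin d),
      Integrable (fun ω => F (X ω)^2 * p (X ω) / p (X ω - θ)) ℙ)
    (Q : EuclideanSpace ℝ (Fin d) → ℝ)
    (hQ : ∀ θ, Q θ = ∫ ω, F (X ω)^2 * p (X ω) / p (X ω - θ) ∂ℙ) :
    ∀ R > (0:ℝ), ∃ C > (0:ℝ),
      ∀ Xh : Ω → EuclideanSpace ℝ (Fin d),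
        Measurable Xh →
        (Set.range Xh).Finite →
        ((ℙ : Measure Ω)[X | MeasurableSpace.comap Xh inferInstance]
          =ᵐ[(ℙ : Measure Ω)] Xh) →
        ∀ θ : EuclideanSpace ℝ (Fin d), ‖θ‖ ≤ R →
          |Q θ - ∫ ω, F (Xh ω)^2 * p (Xh ω) / p (Xh ω - θ) ∂ℙ|
            ≤ C * (∫ ω, ‖X ω - Xh ω‖^2 ∂ℙ) ^ ((1:ℝ)/2) := by
  classical
  obtain ⟨Cg, Rg, hCg, hg⟩ := hgrowth1
  obtain ⟨B, hBpos, hLdiff⟩ := logp_diff_bound p hp_pos hp_smooth hα hg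
  obtain ⟨K₀, hKlip⟩ := hFLip
  have hKnn : (0:ℝ) ≤ (K₀ : ℝ) := K₀.coe_nonneg
  have hF0nn : 0 ≤ F 0 := hFpos 0
  have hFlip' : ∀ x y : EuclideanSpace ℝ (Fin d), |F x - F y| ≤ (K₀:ℝ) * ‖x - y‖ := by
    intro x y
    have := hKlip.dist_le_mul x y
    rwa [Real.dist_eq, dist_eq_norm] at this
  have hFub : ∀ z : EuclideanSpace ℝ (Fin d), F z ≤ F 0 + (K₀:ℝ) * ‖z‖ := by
    intro z
    have h := hFlip' z 0
    rw [sub_zero] at h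
    have := le_abs_self (F z - F 0)
    linarith
  obtain ⟨a, ha1, hFa, hmom⟩ := hmoments
  have hexpint : ∀ M' : ℝ, 0 < M' → Integrable (fun ω => Real.exp (M' * ‖X ω‖)) ℙ := by
    intro M' hM'
    apply Integrable.mono' (hmom M' hM')
      ((Real.continuous_exp.measurable.comp (measurable_const.mul hX.norm)).aestronglyMeasurable)
    filter_upwards with ω
    simp only [Function.comp_apply, Pi.mul_apply]
    rw [Real.norm_eq_abs, abs_of_pos (Real.exp_pos _)]
    have : (0:ℝ) ≤ ‖X ω‖ ^ (4*a/(a-1)) := Real.rpow_nonneg (norm_nonneg _) _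
    linarith
  have hXint : Integrable X ℙ := by
    apply Integrable.mono' (hexpint 1 one_pos) hX.aestronglyMeasurable
    filter_upwards with ω
    have h1 : ‖X ω‖ ≤ Real.exp ‖X ω‖ := by
      have := Real.add_one_le_exp ‖X ω‖; linarith
    simpa using h1
  intro R hR
  have hMpos : (0:ℝ) < 4*B*R+6 := by positivity
  have hc₀nn : (0:ℝ) ≤ 2*(K₀:ℝ)*Real.exp (B*R*(1+R))*(F 0+(K₀:ℝ))
      + 4*B*Real.exp (B*R*(1+R))*(1+R)*(F 0+(K₀:ℝ))^2 := by positivity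
  have hCeint : Integrable (fun ω => Real.exp (2*(4*B*R+6) * ‖X ω‖)) ℙ :=
    hexpint _ (by positivity)
  have hCe1 : (1:ℝ) ≤ ∫ ω, Real.exp (2*(4*B*R+6) * ‖X ω‖) ∂ℙ := by
    calc (1:ℝ) = ∫ _ω, (1:ℝ) ∂ℙ := by simp
      _ ≤ ∫ ω, Real.exp (2*(4*B*R+6) * ‖X ω‖) ∂ℙ :=
          integral_mono (integrable_const 1) hCeint
            (fun ω => Real.one_le_exp (by positivity))
  set c₀ : ℝ := 2*(K₀:ℝ)*Real.exp (B*R*(1+R))*(F 0+(K₀:ℝ))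
      + 4*B*Real.exp (B*R*(1+R))*(1+R)*(F 0+(K₀:ℝ))^2 with hc₀def
  set Ce : ℝ := ∫ ω, Real.exp (2*(4*B*R+6) * ‖X ω‖) ∂ℙ with hCedef
  have hCepos : (0:ℝ) < Ce := lt_of_lt_of_le one_pos hCe1
  refine ⟨(c₀+1) * (4*Ce) ^ ((1:ℝ)/2), by positivity, ?_⟩
  intro Xh hXhm hfin hstat θ hθ
  -- notation
  have hφ_exp : ∀ z : EuclideanSpace ℝ (Fin d),
      F z^2 * p z / p (z - θ)
        = F z^2 * Real.exp (Real.log (p z) - Real.log (p (z-θ))) := by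
    intro z
    rw [Real.exp_sub, Real.exp_log (hp_pos z), Real.exp_log (hp_pos (z-θ)), mul_div_assoc]
  have hptw : ∀ x y : EuclideanSpace ℝ (Fin d),
      |F x^2 * p x / p (x - θ) - F y^2 * p y / p (y - θ)|
        ≤ c₀ * ((Real.exp ((4*B*R+6)*‖x‖) + Real.exp ((4*B*R+6)*‖y‖)) * ‖x-y‖) := by
    intro x y
    rw [hφ_exp x, hφ_exp y]
    exact pointwise_phi_bound (fun z => Real.log (p z)) F B R (K₀:ℝ) (F 0) hBpos hR hKnn hF0nn
      hLdiff hFpos hFub hFlip' θ hθ x y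
  have hφmeas : Measurable (fun z : EuclideanSpace ℝ (Fin d) => F z^2 * p z / p (z - θ)) := by
    apply Measurable.div
    · exact (hF.pow_const 2).mul hp_smooth.continuous.measurable
    · exact hp_smooth.continuous.measurable.comp
        ((continuous_id.sub continuous_const).measurable)
  have hintX : Integrable (fun ω => F (X ω)^2 * p (X ω) / p (X ω - θ)) ℙ := hint1 θ
  obtain ⟨D₀', hD₀'⟩ := (hfin.image fun z => ‖z‖).bddAbove
  have hD₀ : ∀ ω, ‖Xh ω‖ ≤ max D₀' 0 :=
    fun ω => le_trans (hD₀' ⟨Xh ω, ⟨ω, rfl⟩, rfl⟩) (le_max_left _ _)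
  have hD₀nn : (0:ℝ) ≤ max D₀' 0 := le_max_right _ _
  have hintXh : Integrable (fun ω => F (Xh ω)^2 * p (Xh ω) / p (Xh ω - θ)) ℙ := by
    obtain ⟨Cb, hCb⟩ := (hfin.image fun z => |F z^2 * p z / p (z - θ)|).bddAbove
    apply Integrable.mono' (integrable_const Cb) ((hφmeas.comp hXhm).aestronglyMeasurable)
    filter_upwards with ω
    exact hCb ⟨Xh ω, ⟨ω, rfl⟩, rfl⟩
  -- integrability of the square factors
  have hexpXh_int : Integrable (fun ω => Real.exp (2*(4*B*R+6)*‖Xh ω‖)) ℙ := by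
    apply Integrable.mono' (integrable_const (Real.exp (2*(4*B*R+6)*(max D₀' 0))))
      ((Real.continuous_exp.measurable.comp
        (measurable_const.mul hXhm.norm)).aestronglyMeasurable)
    filter_upwards with ω
    simp only [Function.comp_apply]
    rw [Real.norm_eq_abs, abs_of_pos (Real.exp_pos _)]
    exact Real.exp_le_exp.2 (mul_le_mul_of_nonneg_left (hD₀ ω) (by positivity))
  have hg1meas : Measurable (fun ω =>
      Real.exp ((4*B*R+6)*‖X ω‖) + Real.exp ((4*B*R+6)*‖Xh ω‖)) := by
    apply Measurable.add
    · exact Real.continuous_exp.measurable.comp (measurable_const.mul hX.norm)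
    · exact Real.continuous_exp.measurable.comp (measurable_const.mul hXhm.norm)
  have hint_g1sq : Integrable (fun ω =>
      (Real.exp ((4*B*R+6)*‖X ω‖) + Real.exp ((4*B*R+6)*‖Xh ω‖))^2) ℙ := by
    apply Integrable.mono'
      ((hCeint.const_mul 2).add (hexpXh_int.const_mul 2))
      ((hg1meas.pow_const 2).aestronglyMeasurable)
    filter_upwards with ω
    rw [Real.norm_eq_abs, abs_of_nonneg (sq_nonneg _)]
    exact aux_g1sq (4*B*R+6) ‖X ω‖ ‖Xh ω‖
  have hg2meas : Measurable (fun ω => ‖X ω - Xh ω‖) := (hX.sub hXhm).norm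
  have hint_g2sq : Integrable (fun ω => ‖X ω - Xh ω‖^2) ℙ := by
    apply Integrable.mono'
      (((hexpint 1 one_pos).const_mul 8).add (integrable_const (2*(max D₀' 0)^2)))
      ((hg2meas.pow_const 2).aestronglyMeasurable)
    filter_upwards with ω
    show ‖‖X ω - Xh ω‖^2‖ ≤ 8*Real.exp (1*‖X ω‖) + 2*(max D₀' 0)^2
    rw [Real.norm_eq_abs, abs_of_nonneg (sq_nonneg _)]
    have h1 : ‖X ω - Xh ω‖ ≤ ‖X ω‖ + max D₀' 0 :=
      le_trans (norm_sub_le _ _) (by linarith [hD₀ ω])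
    have h2 : ‖X ω - Xh ω‖^2 ≤ (‖X ω‖ + max D₀' 0)^2 :=
      pow_le_pow_left₀ (norm_nonneg _) h1 2
    have h3 : (‖X ω‖ + max D₀' 0)^2 ≤ 2*‖X ω‖^2 + 2*(max D₀' 0)^2 := by
      nlinarith [sq_nonneg (‖X ω‖ - max D₀' 0)]
    have h4 : ‖X ω‖^2 ≤ 4*Real.exp ‖X ω‖ := sq_le_four_mul_exp (norm_nonneg _)
    have h5 : Real.exp ‖X ω‖ = Real.exp (1*‖X ω‖) := by rw [one_mul]
    linarith [h2.trans h3, h4]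
  -- product integrable
  have hint_prod : Integrable (fun ω =>
      (Real.exp ((4*B*R+6)*‖X ω‖) + Real.exp ((4*B*R+6)*‖Xh ω‖)) * ‖X ω - Xh ω‖) ℙ := by
    apply Integrable.mono' ((hint_g1sq.add hint_g2sq).div_const 2)
      ((hg1meas.mul hg2meas).aestronglyMeasurable)
    filter_upwards with ω
    simp only [Pi.mul_apply, Pi.add_apply, Pi.pow_apply]
    rw [Real.norm_eq_abs, abs_of_nonneg (by positivity)]
    exact aux_prod_sq (by positivity) (norm_nonneg _)
  -- Hölder
  have hconj : Real.HolderConjugate 2 2 := Real.HolderConjugate.two_two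
  have hofReal2 : ENNReal.ofReal (2:ℝ) = 2 := by
    simp [ENNReal.ofReal_ofNat]
  have hg1mem : MemLp (fun ω =>
      Real.exp ((4*B*R+6)*‖X ω‖) + Real.exp ((4*B*R+6)*‖Xh ω‖)) (ENNReal.ofReal 2) ℙ := by
    rw [hofReal2]
    exact (memLp_two_iff_integrable_sq hg1meas.aestronglyMeasurable).2 hint_g1sq
  have hg2mem : MemLp (fun ω => ‖X ω - Xh ω‖) (ENNReal.ofReal 2) ℙ := by
    rw [hofReal2]
    exact (memLp_two_iff_integrable_sq hg2meas.aestronglyMeasurable).2 hint_g2sq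
  have hholder := MeasureTheory.integral_mul_le_Lp_mul_Lq_of_nonneg hconj
    (Filter.Eventually.of_forall fun ω => by positivity)
    (Filter.Eventually.of_forall fun ω => norm_nonneg _)
    hg1mem hg2mem
  have hrpow2 : ∀ h : Ω → ℝ, (∫ ω, h ω ^ (2:ℝ) ∂ℙ) = ∫ ω, h ω ^ (2:ℕ) ∂ℙ := by
    intro h
    refine integral_congr_ae (Filter.Eventually.of_forall fun ω => ?_)
    show h ω ^ (2:ℝ) = h ω ^ (2:ℕ)
    rw [show (2:ℝ) = ((2:ℕ):ℝ) by norm_num, Real.rpow_natCast]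
  rw [hrpow2, hrpow2] at hholder
  -- Jensen step
  have hjensen : ∫ ω, Real.exp (2*(4*B*R+6)*‖Xh ω‖) ∂ℙ ≤ Ce := by
    rw [hCedef]
    exact quantizer_jensen X Xh hXhm hfin hstat hXint
      (fun z => Real.exp (2*(4*B*R+6)*‖z‖))
      (exp_norm_convexOn (by positivity))
      (Real.continuous_exp.comp (continuous_const.mul continuous_norm))
      (fun z => (Real.exp_pos _).le)
      hCeint
  have hsq_le : (∫ ω, (Real.exp ((4*B*R+6)*‖X ω‖) + Real.exp ((4*B*R+6)*‖Xh ω‖))^2 ∂ℙ)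
      ≤ 4*Ce := by
    have h1 : (∫ ω, (Real.exp ((4*B*R+6)*‖X ω‖) + Real.exp ((4*B*R+6)*‖Xh ω‖))^2 ∂ℙ)
        ≤ ∫ ω, (2*Real.exp (2*(4*B*R+6)*‖X ω‖) + 2*Real.exp (2*(4*B*R+6)*‖Xh ω‖)) ∂ℙ := by
      apply integral_mono hint_g1sq
        ((hCeint.const_mul 2).add (hexpXh_int.const_mul 2))
      intro ω
      exact aux_g1sq (4*B*R+6) ‖X ω‖ ‖Xh ω‖
    have h2 : ∫ ω, (2*Real.exp (2*(4*B*R+6)*‖X ω‖) + 2*Real.exp (2*(4*B*R+6)*‖Xh ω‖)) ∂ℙ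
        = 2*(∫ ω, Real.exp (2*(4*B*R+6)*‖X ω‖) ∂ℙ)
          + 2*(∫ ω, Real.exp (2*(4*B*R+6)*‖Xh ω‖) ∂ℙ) := by
      rw [integral_add (hCeint.const_mul 2) (hexpXh_int.const_mul 2),
        integral_const_mul, integral_const_mul]
    have h3 : ∫ ω, Real.exp (2*(4*B*R+6)*‖X ω‖) ∂ℙ = Ce := hCedef.symm
    linarith [hjensen, h1, h2.le, h2.ge]
  -- final chain
  rw [hQ θ]
  have hfinal1 : |∫ ω, F (X ω)^2 * p (X ω) / p (X ω - θ) ∂ℙ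
      - ∫ ω, F (Xh ω)^2 * p (Xh ω) / p (Xh ω - θ) ∂ℙ|
      ≤ ∫ ω, |F (X ω)^2 * p (X ω) / p (X ω - θ) - F (Xh ω)^2 * p (Xh ω) / p (Xh ω - θ)| ∂ℙ := by
    rw [← integral_sub hintX hintXh]
    simpa [Real.norm_eq_abs] using
      norm_integral_le_integral_norm (μ := (ℙ : Measure Ω))
        (fun ω => F (X ω)^2 * p (X ω) / p (X ω - θ) - F (Xh ω)^2 * p (Xh ω) / p (Xh ω - θ))
  have hfinal2 : ∫ ω, |F (X ω)^2 * p (X ω) / p (X ω - θ)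
        - F (Xh ω)^2 * p (Xh ω) / p (Xh ω - θ)| ∂ℙ
      ≤ c₀ * ∫ ω, (Real.exp ((4*B*R+6)*‖X ω‖) + Real.exp ((4*B*R+6)*‖Xh ω‖))
          * ‖X ω - Xh ω‖ ∂ℙ := by
    rw [← integral_const_mul]
    apply integral_mono_of_nonneg (Filter.Eventually.of_forall fun ω => abs_nonneg _)
      (hint_prod.const_mul c₀)
    filter_upwards with ω
    exact hptw (X ω) (Xh ω)
  have hI2nn : (0:ℝ) ≤ ∫ ω, ‖X ω - Xh ω‖^2 ∂ℙ :=
    integral_nonneg fun ω => sq_nonneg _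
  have hfinal3 : (∫ ω, (Real.exp ((4*B*R+6)*‖X ω‖) + Real.exp ((4*B*R+6)*‖Xh ω‖))^2 ∂ℙ)
        ^ ((1:ℝ)/2) ≤ (4*Ce) ^ ((1:ℝ)/2) := by
    apply Real.rpow_le_rpow (integral_nonneg fun ω => sq_nonneg _) hsq_le (by norm_num)
  have hg2pow_nn : (0:ℝ) ≤ (∫ ω, ‖X ω - Xh ω‖^2 ∂ℙ) ^ ((1:ℝ)/2) :=
    Real.rpow_nonneg hI2nn _
  calc |∫ ω, F (X ω)^2 * p (X ω) / p (X ω - θ) ∂ℙ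
      - ∫ ω, F (Xh ω)^2 * p (Xh ω) / p (Xh ω - θ) ∂ℙ|
      ≤ ∫ ω, |F (X ω)^2 * p (X ω) / p (X ω - θ)
          - F (Xh ω)^2 * p (Xh ω) / p (Xh ω - θ)| ∂ℙ := hfinal1
    _ ≤ c₀ * ∫ ω, (Real.exp ((4*B*R+6)*‖X ω‖) + Real.exp ((4*B*R+6)*‖Xh ω‖))
          * ‖X ω - Xh ω‖ ∂ℙ := hfinal2
    _ ≤ c₀ * ((∫ ω, (Real.exp ((4*B*R+6)*‖X ω‖) + Real.exp ((4*B*R+6)*‖Xh ω‖))^2 ∂ℙ)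
          ^ ((1:ℝ)/2) * (∫ ω, ‖X ω - Xh ω‖^2 ∂ℙ) ^ ((1:ℝ)/2)) := by
        apply mul_le_mul_of_nonneg_left _ hc₀nn
        exact hholder
    _ ≤ c₀ * ((4*Ce) ^ ((1:ℝ)/2) * (∫ ω, ‖X ω - Xh ω‖^2 ∂ℙ) ^ ((1:ℝ)/2)) := by
        apply mul_le_mul_of_nonneg_left _ hc₀nn
        exact mul_le_mul_of_nonneg_right hfinal3 hg2pow_nn
    _ ≤ (c₀+1) * (4*Ce) ^ ((1:ℝ)/2) * (∫ ω, ‖X ω - Xh ω‖^2 ∂ℙ) ^ ((1:ℝ)/2) := by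
        have h1 : (0:ℝ) ≤ (4*Ce) ^ ((1:ℝ)/2) := Real.rpow_nonneg (by positivity) _
        nlinarith [mul_nonneg h1 hg2pow_nn]
end

section
/- Let Q : ℝ^d → ℝ be continuous and strictly convex with a unique global minimizer θ*, and let (Q_N)_{N≥1} be convex functions ℝ^d → ℝ converging to Q locally uniformly. If for each N, θ_N is a global minimizer of Q_N, then θ_N → θ* and Q_N(θ_N) → Q(θ*) as N → ∞. -/
open Set Filter Topology

/-- If `Q` is continuous and strictly convex with unique global minimizer `θ*`, and convex
functions `Q_N` converge to `Q` locally uniformly (uniformly on every closed ball), then any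
sequence of global minimizers `θ_N` of `Q_N` converges to `θ*`, and `Q_N(θ_N) → Q(θ*)`. -/
theorem stmt9 {d : ℕ} (Q : EuclideanSpace ℝ (Fin d) → ℝ)
    (hQcont : Continuous Q)
    (hQconv : StrictConvexOn ℝ univ Q)
    (θstar : EuclideanSpace ℝ (Fin d))
    (hmin : ∀ θ, Q θstar ≤ Q θ)
    (huniq : ∀ θ, (∀ θ', Q θ ≤ Q θ') → θ = θstar)
    (QN : ℕ → EuclideanSpace ℝ (Fin d) → ℝ)
    (hQNconv : ∀ N, ConvexOn ℝ univ (QN N))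
    (hloc : ∀ R > 0, TendstoUniformlyOn QN Q atTop (Metric.closedBall 0 R))
    (θN : ℕ → EuclideanSpace ℝ (Fin d))
    (hθN : ∀ N θ, QN N (θN N) ≤ QN N θ) :
    Tendsto θN atTop (𝓝 θstar) ∧ Tendsto (fun N => QN N (θN N)) atTop (𝓝 (Q θstar)) := by
  rcases subsingleton_or_nontrivial (EuclideanSpace ℝ (Fin d)) with hsub | hnt
  · have hθ : θN = fun _ => θstar := funext fun N => Subsingleton.elim _ _
    have hmem : θstar ∈ Metric.closedBall (0 : EuclideanSpace ℝ (Fin d)) 1 := by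
      have : θstar = (0 : EuclideanSpace ℝ (Fin d)) := Subsingleton.elim _ _
      simp [this]
    refine ⟨by rw [hθ]; exact tendsto_const_nhds, ?_⟩
    have := (hloc 1 one_pos).tendsto_at hmem
    simpa [hθ] using this
  · have keyA : ∀ ε > (0:ℝ), ∀ᶠ N in atTop, dist (θN N) θstar < ε := by
      intro ε hε
      obtain ⟨y0, hy0⟩ := (NormedSpace.sphere_nonempty (x := θstar) (r := ε)).mpr hε.le
      obtain ⟨ym, hym, hmins⟩ := (isCompact_sphere θstar ε).exists_isMinOn ⟨y0, hy0⟩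
        hQcont.continuousOn
      have hymne : ym ≠ θstar := by
        intro h
        have hd : dist ym θstar = ε := Metric.mem_sphere.mp hym
        rw [h, dist_self] at hd
        exact hε.ne hd
      have hm : Q θstar < Q ym := by
        rcases (hmin ym).lt_or_eq with h | h
        · exact h
        · exact absurd (huniq ym fun θ' => h ▸ hmin θ') hymne
      set δ := (Q ym - Q θstar) / 2 with hδdef
      have hδ : 0 < δ := by simp only [hδdef]; linarith
      set R := ‖θstar‖ + ε with hRdef
      have hRpos : 0 < R := by have := norm_nonneg θstar; simp only [hRdef]; linarith
      have hδ' := (Metric.tendstoUniformlyOn_iff.mp (hloc R hRpos)) δ hδ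
      filter_upwards [hδ'] with N hN
      by_contra hcon
      push_neg at hcon
      set r := dist (θN N) θstar with hr
      have hrpos : 0 < r := lt_of_lt_of_le hε hcon
      set t := ε / r with htdef
      have ht0 : 0 < t := div_pos hε hrpos
      have ht1 : t ≤ 1 := (div_le_one hrpos).mpr hcon
      set y := (1 - t) • θstar + t • θN N with hydef
      have hynorm : ‖y - θstar‖ = ε := by
        have : y - θstar = t • (θN N - θstar) := by
          rw [hydef]; module
        rw [this, norm_smul, Real.norm_of_nonneg ht0.le, ← dist_eq_norm, ← hr]
        rw [htdef, div_mul_cancel₀ _ hrpos.ne']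
      have hysph : y ∈ Metric.sphere θstar ε := by
        rw [Metric.mem_sphere, dist_eq_norm]; exact hynorm
      have hyball : y ∈ Metric.closedBall 0 R := by
        rw [Metric.mem_closedBall, dist_zero_right]
        calc ‖y‖ = ‖θstar + (y - θstar)‖ := by congr 1; abel
          _ ≤ ‖θstar‖ + ‖y - θstar‖ := norm_add_le _ _
          _ = R := by rw [hynorm]
      have hsball : θstar ∈ Metric.closedBall (0 : EuclideanSpace ℝ (Fin d)) R := by
        rw [Metric.mem_closedBall, dist_zero_right, hRdef]; linarith
      have hconv := (hQNconv N).2 (mem_univ θstar) (mem_univ (θN N))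
        (by linarith : (0:ℝ) ≤ 1 - t) ht0.le (by ring)
      rw [← hydef] at hconv
      simp only [smul_eq_mul] at hconv
      have h1 : QN N y ≤ QN N θstar := by
        have hle := hθN N θstar
        calc QN N y ≤ (1 - t) * QN N θstar + t * QN N (θN N) := hconv
          _ ≤ (1 - t) * QN N θstar + t * QN N θstar := by nlinarith
          _ = QN N θstar := by ring
      have h2 := hN θstar hsball
      have h3 := hN y hyball
      have h4 : Q ym ≤ Q y := hmins hysph
      rw [Real.dist_eq, abs_lt] at h2 h3
      simp only [hδdef] at h2 h3
      linarith [h2.1, h2.2, h3.1, h3.2]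
    constructor
    · exact Metric.tendsto_nhds.mpr fun ε hε => keyA ε hε
    · rw [Metric.tendsto_nhds]
      intro ρ hρ
      obtain ⟨ε', hε', hQc⟩ := Metric.continuous_iff.mp hQcont θstar (ρ / 2) (by linarith)
      set R := ‖θstar‖ + ε' with hRdef
      have hRpos : 0 < R := by have := norm_nonneg θstar; simp only [hRdef]; linarith
      have huni := (Metric.tendstoUniformlyOn_iff.mp (hloc R hRpos)) (ρ / 2) (by linarith)
      filter_upwards [keyA ε' hε', huni] with N h1 h2
      have hball : θN N ∈ Metric.closedBall (0 : EuclideanSpace ℝ (Fin d)) R := by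
        rw [Metric.mem_closedBall, dist_zero_right]
        calc ‖θN N‖ = ‖θstar + (θN N - θstar)‖ := by congr 1; abel
          _ ≤ ‖θstar‖ + ‖θN N - θstar‖ := norm_add_le _ _
          _ ≤ ‖θstar‖ + ε' := by
              have := dist_eq_norm (θN N) θstar ▸ h1.le
              linarith [this]
      have hA := h2 (θN N) hball
      have hB := hQc (θN N) h1
      calc dist (QN N (θN N)) (Q θstar)
          ≤ dist (QN N (θN N)) (Q (θN N)) + dist (Q (θN N)) (Q θstar) := dist_triangle _ _ _
        _ < ρ / 2 + ρ / 2 := by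
            have : dist (QN N (θN N)) (Q (θN N)) = dist (Q (θN N)) (QN N (θN N)) := dist_comm _ _
            rw [this]; exact add_lt_add hA hB
        _ = ρ := by ring
end

section
/- Let X be an ℝ^d-valued random vector in L² and X̂ a stationary quantization of X (X̂ takes finitely many values and E[X | X̂] = X̂ a.s.). If F : ℝ^d → ℝ is differentiable with an α-Hölder gradient DF (α ∈ (0,1]) with Hölder constant [DF]_α, and F(X), F(X̂) are integrable, then |E[F(X)] − E[F(X̂)]| ≤ [DF]_α ‖X − X̂‖₂^{1+α}, where ‖Y‖₂ = (E|Y|²)^{1/2}. -/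
open MeasureTheory Set
open scoped ENNReal ProbabilityTheory

section Aux14

open InnerProductSpace
open scoped RealInnerProductSpace

private lemma taylor14 {d : ℕ} (F : EuclideanSpace ℝ (Fin d) → ℝ) (hF : Differentiable ℝ F)
    {α L : ℝ} (hα : 0 < α) (hL0 : 0 ≤ L)
    (hL : ∀ x y, ‖gradient F x - gradient F y‖ ≤ L * ‖x - y‖ ^ α)
    (x y : EuclideanSpace ℝ (Fin d)) :
    |F x - F y - ⟪gradient F y, x - y⟫_ℝ| ≤ L * ‖x - y‖ ^ (1 + α) := by
  have hkey : ∀ z, ‖fderiv ℝ F z - fderiv ℝ F y‖ = ‖gradient F z - gradient F y‖ := by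
    intro z
    have : gradient F z - gradient F y
        = (toDual ℝ (EuclideanSpace ℝ (Fin d))).symm (fderiv ℝ F z - fderiv ℝ F y) := by
      simp [gradient, map_sub]
    rw [this, LinearIsometryEquiv.norm_map]
  have hinner : ⟪gradient F y, x - y⟫_ℝ = fderiv ℝ F y (x - y) := by
    have : toDual ℝ (EuclideanSpace ℝ (Fin d)) (gradient F y) = fderiv ℝ F y := by
      simp [gradient]
    rw [← this]; rfl
  have hseg : ∀ z ∈ segment ℝ y x, ‖z - y‖ ≤ ‖x - y‖ := by
    intro z hz
    rcases hz with ⟨a, b, ha, hb, hab, rfl⟩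
    have h : a • y + b • x - y = b • (x - y) := by
      have : a = 1 - b := by linarith
      subst this; module
    rw [h, norm_smul]
    have : ‖x - y‖ ≥ 0 := norm_nonneg _
    calc ‖b‖ * ‖x - y‖ = b * ‖x - y‖ := by rw [Real.norm_of_nonneg hb]
    _ ≤ 1 * ‖x - y‖ := by nlinarith
    _ = ‖x - y‖ := one_mul _
  have bound : ∀ z ∈ segment ℝ y x, ‖fderiv ℝ F z - fderiv ℝ F y‖ ≤ L * ‖x - y‖ ^ α := by
    intro z hz
    rw [hkey]
    calc ‖gradient F z - gradient F y‖ ≤ L * ‖z - y‖ ^ α := hL z y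
    _ ≤ L * ‖x - y‖ ^ α := by
        have := Real.rpow_le_rpow (norm_nonneg _) (hseg z hz) hα.le
        nlinarith [Real.rpow_nonneg (norm_nonneg (z - y)) α]
  have := (convex_segment y x).norm_image_sub_le_of_norm_fderiv_le'
    (fun z _ => hF z) bound (left_mem_segment ℝ y x) (right_mem_segment ℝ y x)
  rw [hinner, ← Real.norm_eq_abs]
  calc ‖F x - F y - fderiv ℝ F y (x - y)‖ ≤ L * ‖x - y‖ ^ α * ‖x - y‖ := this
  _ = L * ‖x - y‖ ^ (1 + α) := by
      rw [mul_assoc, Real.rpow_add' (norm_nonneg _) (by linarith), Real.rpow_one]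
      ring

end Aux14

open InnerProductSpace in
open scoped RealInnerProductSpace in
/-- Quadrature error bound for stationary quantization and a differentiable functional with
`α`-Hölder gradient: `|E[F(X)] − E[F(X̂)]| ≤ [DF]_α ‖X − X̂‖₂^{1+α}`. -/
theorem stmt14 {d : ℕ} {Ω : Type*} [MeasureSpace Ω] [IsProbabilityMeasure (ℙ : Measure Ω)]
    (X Xh : Ω → EuclideanSpace ℝ (Fin d))
    (hX : Measurable X) (hXh : Measurable Xh)
    (hX2 : Integrable (fun ω => ‖X ω‖^2) ℙ)
    (hfin : (Set.range Xh).Finite)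
    (hstat : (ℙ : Measure Ω)[X | MeasurableSpace.comap Xh inferInstance] =ᵐ[(ℙ : Measure Ω)] Xh)
    (F : EuclideanSpace ℝ (Fin d) → ℝ)
    (hF : Differentiable ℝ F)
    (α L : ℝ) (hα : α ∈ Ioc (0:ℝ) 1)
    (hL : ∀ x y, ‖gradient F x - gradient F y‖ ≤ L * ‖x - y‖ ^ α)
    (hLmin : ∀ L' : ℝ, (∀ x y, ‖gradient F x - gradient F y‖ ≤ L' * ‖x - y‖ ^ α) → L ≤ L')
    (hFX : Integrable (fun ω => F (X ω)) ℙ)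
    (hFXh : Integrable (fun ω => F (Xh ω)) ℙ) :
    |(∫ ω, F (X ω) ∂ℙ) - ∫ ω, F (Xh ω) ∂ℙ|
      ≤ L * ((∫ ω, ‖X ω - Xh ω‖^2 ∂ℙ) ^ ((1:ℝ)/2)) ^ (1 + α) := by
  classical
  obtain ⟨hα0, hα1⟩ := hα
  have h1α : (0:ℝ) < 1 + α := by linarith
  -- trivial case `d = 0`
  rcases Nat.eq_zero_or_pos d with hd | hd
  · subst hd
    have hXX : ∀ ω, X ω = Xh ω := fun ω => Subsingleton.elim _ _
    have h1 : (∫ ω, F (X ω) ∂ℙ) = ∫ ω, F (Xh ω) ∂ℙ := by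
      congr 1; ext ω; rw [hXX ω]
    have h2 : (∫ ω, ‖X ω - Xh ω‖^2 ∂ℙ) = 0 := by
      have : ∀ ω, ‖X ω - Xh ω‖^2 = 0 := fun ω => by rw [hXX ω]; simp
      simp [this]
    rw [h1, h2, sub_self, abs_zero, Real.zero_rpow (by norm_num : (1:ℝ)/2 ≠ 0),
      Real.zero_rpow h1α.ne', mul_zero]
  -- `L` is nonnegative
  have hL0 : 0 ≤ L := by
    have h := hL (EuclideanSpace.single (⟨0, hd⟩ : Fin d) (1:ℝ)) 0
    rw [sub_zero, EuclideanSpace.norm_single, norm_one, Real.one_rpow, mul_one] at h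
    exact le_trans (norm_nonneg _) h
  set g : EuclideanSpace ℝ (Fin d) → EuclideanSpace ℝ (Fin d) := gradient F with hg
  -- measurability of compositions with `Xh`
  have hXhpre : ∀ S : Set (EuclideanSpace ℝ (Fin d)), MeasurableSet (Xh ⁻¹' S) := by
    intro S
    have h : Xh ⁻¹' S = ⋃ v ∈ (Set.range Xh ∩ S), Xh ⁻¹' {v} := by
      ext ω; simp [eq_comm]
    rw [h]
    exact MeasurableSet.biUnion ((hfin.subset inter_subset_left).countable)
      (fun v _ => hXh (measurableSet_singleton v))
  have hgXh : Measurable fun ω => g (Xh ω) := fun t _ => hXhpre (g ⁻¹' t)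
  -- integrability facts
  have hXmem : MemLp X 2 ℙ := (memLp_two_iff_integrable_sq_norm hX.aestronglyMeasurable).2 hX2
  have hXint : Integrable X ℙ := hXmem.integrable one_le_two
  obtain ⟨C, hC⟩ := (hfin.image norm).bddAbove
  have hXhmem : MemLp Xh 2 ℙ := by
    refine (memLp_top_of_bound hXh.aestronglyMeasurable C
      (ae_of_all _ fun ω => ?_)).mono_exponent le_top
    exact hC (mem_image_of_mem _ (mem_range_self ω))
  have hXhint : Integrable Xh ℙ := hXhmem.integrable one_le_two
  have hD2 : MemLp (fun ω => X ω - Xh ω) 2 ℙ := hXmem.sub hXhmem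
  have hDint : Integrable (fun ω => X ω - Xh ω) ℙ := hXint.sub hXhint
  have hDsq : Integrable (fun ω => ‖X ω - Xh ω‖^2) ℙ :=
    (memLp_two_iff_integrable_sq_norm hD2.aestronglyMeasurable).1 hD2
  obtain ⟨M, hM⟩ := (hfin.image (fun v => ‖g v‖)).bddAbove
  have hMb : ∀ ω, ‖g (Xh ω)‖ ≤ M := fun ω => hM (mem_image_of_mem _ (mem_range_self ω))
  have hinner_meas : Measurable fun ω => ⟪g (Xh ω), X ω - Xh ω⟫_ℝ :=
    hgXh.inner (hX.sub hXh)
  have hinner_int : Integrable (fun ω => ⟪g (Xh ω), X ω - Xh ω⟫_ℝ) ℙ := by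
    refine (hDint.norm.const_mul M).mono' hinner_meas.aestronglyMeasurable
      (ae_of_all _ fun ω => ?_)
    calc ‖⟪g (Xh ω), X ω - Xh ω⟫_ℝ‖ ≤ ‖g (Xh ω)‖ * ‖X ω - Xh ω‖ := norm_inner_le_norm _ _
    _ ≤ M * ‖X ω - Xh ω‖ := mul_le_mul_of_nonneg_right (hMb ω) (norm_nonneg _)
  -- the first-order term has zero expectation
  have hzero : ∫ ω, ⟪g (Xh ω), X ω - Xh ω⟫_ℝ ∂ℙ = 0 := by
    have hm : MeasurableSpace.comap Xh inferInstance ≤ (inferInstance : MeasurableSpace Ω) :=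
      hXh.comap_le
    set s := hfin.toFinset with hs
    have hA : ∀ v, MeasurableSet (Xh ⁻¹' {v}) := fun v => hXh (measurableSet_singleton v)
    have hcover : (⋃ v ∈ s, Xh ⁻¹' {v}) = univ := by
      ext ω; simp only [mem_iUnion, mem_preimage, mem_singleton_iff, mem_univ, iff_true]
      exact ⟨Xh ω, by simp [hs, hfin.mem_toFinset], rfl⟩
    have hdisj : (↑s : Set (EuclideanSpace ℝ (Fin d))).Pairwise
        (Function.onFun Disjoint fun v => Xh ⁻¹' {v}) := by
      intro u _ v _ huv
      apply Set.disjoint_left.2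
      rintro ω h1 h2
      exact huv (by rw [← show Xh ω = u from h1, show Xh ω = v from h2])
    rw [← setIntegral_univ, ← hcover,
      integral_biUnion_finset s (fun v _ => hA v) hdisj (fun v _ => hinner_int.integrableOn)]
    refine Finset.sum_eq_zero fun v hv => ?_
    have hsm : MeasurableSet[MeasurableSpace.comap Xh inferInstance] (Xh ⁻¹' {v}) :=
      ⟨{v}, measurableSet_singleton v, rfl⟩
    have h1 : ∫ ω in Xh ⁻¹' {v}, X ω ∂ℙ = ∫ ω in Xh ⁻¹' {v}, Xh ω ∂ℙ := by
      rw [← setIntegral_condExp hm hXint hsm]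
      exact setIntegral_congr_ae (hA v) (hstat.mono fun ω h _ => h)
    have h2 : ∫ ω in Xh ⁻¹' {v}, (X ω - Xh ω) ∂ℙ = 0 := by
      rw [integral_sub hXint.integrableOn hXhint.integrableOn, h1, sub_self]
    have h3 : ∫ ω in Xh ⁻¹' {v}, ⟪g (Xh ω), X ω - Xh ω⟫_ℝ ∂ℙ
        = ∫ ω in Xh ⁻¹' {v}, ⟪g v, X ω - Xh ω⟫_ℝ ∂ℙ :=
      setIntegral_congr_fun (hA v) (fun ω hω => by rw [show Xh ω = v from hω])
    rw [h3]
    have h4 := ContinuousLinearMap.integral_comp_comm (innerSL ℝ (g v))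
      (μ := (ℙ : Measure Ω).restrict (Xh ⁻¹' {v})) (φ := fun ω => X ω - Xh ω)
      (hXint.integrableOn.sub hXhint.integrableOn)
    simp only [innerSL_apply_apply] at h4
    rw [h4, h2, inner_zero_right]
  -- integrability of the Hölder remainder bound
  have hpow_meas : Measurable fun ω => ‖X ω - Xh ω‖ ^ (1 + α) :=
    (Real.continuous_rpow_const h1α.le).measurable.comp (hX.sub hXh).norm
  have hpow_int : Integrable (fun ω => ‖X ω - Xh ω‖ ^ (1 + α)) ℙ := by
    refine ((integrable_const (1:ℝ)).add hDsq).mono' hpow_meas.aestronglyMeasurable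
      (ae_of_all _ fun ω => ?_)
    simp only [Pi.add_apply]
    have ht0 : (0:ℝ) ≤ ‖X ω - Xh ω‖ := norm_nonneg _
    rw [Real.norm_of_nonneg (Real.rpow_nonneg ht0 _)]
    rcases le_or_gt ‖X ω - Xh ω‖ 1 with h | h
    · have h1 : ‖X ω - Xh ω‖ ^ (1 + α) ≤ 1 := Real.rpow_le_one ht0 h h1α.le
      nlinarith [sq_nonneg ‖X ω - Xh ω‖]
    · have h2 : ‖X ω - Xh ω‖ ^ (1 + α) ≤ ‖X ω - Xh ω‖ ^ ((2:ℕ):ℝ) :=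
        Real.rpow_le_rpow_of_exponent_le h.le (by push_cast; linarith)
      rw [Real.rpow_natCast] at h2
      nlinarith
  -- pointwise Taylor bound
  have htaylor : ∀ ω, |F (X ω) - F (Xh ω) - ⟪g (Xh ω), X ω - Xh ω⟫_ℝ|
      ≤ L * ‖X ω - Xh ω‖ ^ (1 + α) := fun ω =>
    taylor14 F hF hα0 hL0 hL (X ω) (Xh ω)
  have hRint : Integrable (fun ω => F (X ω) - F (Xh ω) - ⟪g (Xh ω), X ω - Xh ω⟫_ℝ) ℙ :=
    (hFX.sub hFXh).sub hinner_int
  -- Lyapunov inequality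
  have hlyap : ∫ ω, ‖X ω - Xh ω‖ ^ (1 + α) ∂ℙ
      ≤ (∫ ω, ‖X ω - Xh ω‖ ^ 2 ∂ℙ) ^ ((1 + α) / 2) := by
    set D : Ω → EuclideanSpace ℝ (Fin d) := fun ω => X ω - Xh ω with hD
    have hDm : Measurable D := hX.sub hXh
    set K := ∫⁻ ω, (‖D ω‖₊ : ℝ≥0∞) ^ (1 + α) ∂ℙ with hKdef
    set J := ∫⁻ ω, (‖D ω‖₊ : ℝ≥0∞) ^ (2:ℝ) ∂ℙ with hJdef
    have hJtop : J ≠ ∞ := by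
      have h := lintegral_rpow_enorm_lt_top_of_eLpNorm_lt_top (f := D) two_ne_zero
        ENNReal.ofNat_ne_top hD2.2
      rw [show ((2:ℝ≥0∞)).toReal = (2:ℝ) from by norm_num] at h
      exact h.ne
    have hmono : eLpNorm D (ENNReal.ofReal (1 + α)) ℙ ≤ eLpNorm D 2 ℙ := by
      refine eLpNorm_le_eLpNorm_of_exponent_le ?_ hD2.aestronglyMeasurable
      rw [show (2:ℝ≥0∞) = ENNReal.ofReal 2 by simp]
      exact ENNReal.ofReal_le_ofReal (by linarith)
    have hKJ : K ≤ J ^ ((1 + α) / 2) := by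
      have he1 : eLpNorm D (ENNReal.ofReal (1 + α)) ℙ = K ^ (1 / (1 + α)) := by
        rw [eLpNorm_eq_lintegral_rpow_enorm_toReal (by simp [h1α]) ENNReal.ofReal_ne_top,
          ENNReal.toReal_ofReal h1α.le]
        rfl
      have he2 : eLpNorm D 2 ℙ = J ^ ((1:ℝ) / 2) := by
        rw [eLpNorm_eq_lintegral_rpow_enorm_toReal two_ne_zero ENNReal.ofNat_ne_top,
          show ((2:ℝ≥0∞)).toReal = (2:ℝ) from by norm_num]
        rfl
      rw [he1, he2] at hmono
      calc K = (K ^ (1 / (1 + α))) ^ (1 + α) := by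
            rw [← ENNReal.rpow_mul, one_div, inv_mul_cancel₀ h1α.ne', ENNReal.rpow_one]
      _ ≤ (J ^ ((1:ℝ) / 2)) ^ (1 + α) := ENNReal.rpow_le_rpow hmono h1α.le
      _ = J ^ ((1 + α) / 2) := by rw [← ENNReal.rpow_mul]; ring_nf
    have hKint : ∫ ω, ‖D ω‖ ^ (1 + α) ∂ℙ = K.toReal := by
      rw [integral_eq_lintegral_of_nonneg_ae
        (ae_of_all _ fun ω => Real.rpow_nonneg (norm_nonneg _) _)
        (((Real.continuous_rpow_const h1α.le).measurable.comp hDm.norm).aestronglyMeasurable)]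
      congr 1
      refine lintegral_congr fun ω => ?_
      rw [← enorm_eq_nnnorm, ← ofReal_norm, ← ENNReal.ofReal_rpow_of_nonneg (norm_nonneg _) h1α.le]
    have hJint : ∫ ω, ‖D ω‖ ^ 2 ∂ℙ = J.toReal := by
      rw [integral_eq_lintegral_of_nonneg_ae (ae_of_all _ fun ω => by positivity)
        ((hDm.norm.pow_const 2).aestronglyMeasurable)]
      congr 1
      refine lintegral_congr fun ω => ?_
      rw [← Real.rpow_natCast ‖D ω‖ 2, ← enorm_eq_nnnorm, ← ofReal_norm,
        ← ENNReal.ofReal_rpow_of_nonneg (norm_nonneg _) (by norm_num : (0:ℝ) ≤ ((2:ℕ):ℝ))]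
      norm_num
    rw [hKint, hJint, ENNReal.toReal_rpow]
    exact ENNReal.toReal_mono (ENNReal.rpow_ne_top_of_nonneg (by positivity) hJtop) hKJ
  -- put everything together
  have hInonneg : (0:ℝ) ≤ ∫ ω, ‖X ω - Xh ω‖ ^ 2 ∂ℙ :=
    integral_nonneg fun ω => by positivity
  have hsub1 : Integrable (fun ω => F (X ω) - F (Xh ω)) ℙ := hFX.sub hFXh
  have hsplit : (∫ ω, F (X ω) ∂ℙ) - ∫ ω, F (Xh ω) ∂ℙ
      = ∫ ω, (F (X ω) - F (Xh ω) - ⟪g (Xh ω), X ω - Xh ω⟫_ℝ) ∂ℙ := by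
    rw [integral_sub hsub1 hinner_int, integral_sub hFX hFXh, hzero, sub_zero]
  rw [hsplit]
  calc |∫ ω, (F (X ω) - F (Xh ω) - ⟪g (Xh ω), X ω - Xh ω⟫_ℝ) ∂ℙ|
      ≤ ∫ ω, |F (X ω) - F (Xh ω) - ⟪g (Xh ω), X ω - Xh ω⟫_ℝ| ∂ℙ := by
        rw [← Real.norm_eq_abs]
        exact (norm_integral_le_integral_norm _).trans_eq (by simp [Real.norm_eq_abs])
  _ ≤ ∫ ω, L * ‖X ω - Xh ω‖ ^ (1 + α) ∂ℙ :=
        integral_mono hRint.abs (hpow_int.const_mul L) fun ω => htaylor ω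
  _ = L * ∫ ω, ‖X ω - Xh ω‖ ^ (1 + α) ∂ℙ := integral_const_mul L _
  _ ≤ L * (∫ ω, ‖X ω - Xh ω‖ ^ 2 ∂ℙ) ^ ((1 + α) / 2) :=
        mul_le_mul_of_nonneg_left hlyap hL0
  _ = L * ((∫ ω, ‖X ω - Xh ω‖^2 ∂ℙ) ^ ((1:ℝ)/2)) ^ (1 + α) := by
        rw [← Real.rpow_mul hInonneg]
        ring_nf
end

section
/- Let X be an ℝ^d-valued random vector in L² and X̂ a stationary quantization of X. Let θ : ℝ^d → ℝ₊ be a nonnegative convex function with θ(X) ∈ L², and let F : ℝ^d → ℝ satisfy |F(x) − F(y)| ≤ [F]_Lip |x − y| (θ(x) + θ(y)) for all x, y. Then F(X) is integrable and |E[F(X)] − E[F(X̂)]| ≤ 2 [F]_Lip ‖X − X̂‖₂ ‖θ(X)‖₂. -/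
open MeasureTheory Set
open scoped ENNReal ProbabilityTheory

/-- Quadrature error bound for stationary quantization and a locally Lipschitz functional with
`θ`-growth: `F(X)` is integrable and `|E[F(X)] − E[F(X̂)]| ≤ 2 [F]_Lip ‖X − X̂‖₂ ‖θ(X)‖₂`. -/
theorem stmt15 {d : ℕ} {Ω : Type*} [MeasureSpace Ω] [IsProbabilityMeasure (ℙ : Measure Ω)]
    (X Xh : Ω → EuclideanSpace ℝ (Fin d))
    (hX : Measurable X) (hXh : Measurable Xh)
    (hX2 : Integrable (fun ω => ‖X ω‖^2) ℙ)
    (hfin : (Set.range Xh).Finite)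
    (hstat : (ℙ : Measure Ω)[X | MeasurableSpace.comap Xh inferInstance] =ᵐ[(ℙ : Measure Ω)] Xh)
    (θf : EuclideanSpace ℝ (Fin d) → ℝ)
    (hθconv : ConvexOn ℝ univ θf)
    (hθnonneg : ∀ x, 0 ≤ θf x)
    (hθL2 : Integrable (fun ω => (θf (X ω))^2) ℙ)
    (F : EuclideanSpace ℝ (Fin d) → ℝ)
    (L : ℝ)
    (hgrowth : ∀ x y, |F x - F y| ≤ L * ‖x - y‖ * (θf x + θf y)) :
    Integrable (fun ω => F (X ω)) ℙ ∧
    |(∫ ω, F (X ω) ∂ℙ) - ∫ ω, F (Xh ω) ∂ℙ|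
      ≤ 2 * L * ((∫ ω, ‖X ω - Xh ω‖^2 ∂ℙ) ^ ((1:ℝ)/2))
          * ((∫ ω, (θf (X ω))^2 ∂ℙ) ^ ((1:ℝ)/2)) := by
  classical
  rcases lt_or_ge L 0 with hL | hL
  · -- degenerate case: `L < 0` forces `F` constant and `‖x-y‖ * (θf x + θf y) = 0`
    have hzero : ∀ x y, ‖x - y‖ * (θf x + θf y) = 0 ∧ F x = F y := by
      intro x y
      have h := hgrowth x y
      have hnn : 0 ≤ ‖x - y‖ * (θf x + θf y) := by
        have := hθnonneg x; have := hθnonneg y; positivity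
      have hle : L * ‖x - y‖ * (θf x + θf y) ≤ 0 := by nlinarith
      have habs : |F x - F y| = 0 := le_antisymm (h.trans hle) (abs_nonneg _)
      constructor
      · nlinarith [abs_nonneg (F x - F y), h]
      · have := abs_eq_zero.mp habs
        linarith [sub_eq_zero.mp this]
    have hFX : (fun ω => F (X ω)) = fun _ => F 0 := funext fun ω => (hzero (X ω) 0).2
    have hFXh : (fun ω => F (Xh ω)) = fun _ => F 0 := funext fun ω => (hzero (Xh ω) 0).2
    refine ⟨by rw [hFX]; exact integrable_const _, ?_⟩
    rw [hFX, hFXh, sub_self, abs_zero]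
    by_cases hXX : ∀ ω, X ω = Xh ω
    · have h0 : (fun ω => ‖X ω - Xh ω‖^2) = fun _ => (0:ℝ) :=
        funext fun ω => by rw [hXX ω]; simp
      rw [h0, integral_zero, Real.zero_rpow (by norm_num)]
      simp
    · push_neg at hXX
      obtain ⟨ω₀, hω₀⟩ := hXX
      have hθ0 : ∀ x, θf x = 0 := by
        intro x
        have h := (hzero x (x - (X ω₀ - Xh ω₀))).1
        have hne : ‖x - (x - (X ω₀ - Xh ω₀))‖ ≠ 0 := by
          rw [sub_sub_cancel]
          exact norm_ne_zero_iff.mpr (sub_ne_zero.mpr hω₀)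
        rcases mul_eq_zero.mp h with h' | h'
        · exact absurd h' hne
        · linarith [hθnonneg x, hθnonneg (x - (X ω₀ - Xh ω₀))]
      have h0 : (fun ω => (θf (X ω))^2) = fun _ => (0:ℝ) :=
        funext fun ω => by rw [hθ0]; ring
      rw [h0, integral_zero, Real.zero_rpow (by norm_num)]
      simp
  · -- main case `0 ≤ L`
    have hθcont : Continuous θf :=
      continuousOn_univ.mp (hθconv.continuousOn isOpen_univ)
    have hFcont : Continuous F := by
      rw [continuous_iff_continuousAt]
      intro x
      have h0 : Filter.Tendsto (fun y => F y - F x) (nhds x) (nhds 0) := by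
        apply squeeze_zero_norm (fun y => by simpa [Real.norm_eq_abs] using hgrowth y x)
        have hc : Continuous fun y => L * ‖y - x‖ * (θf y + θf x) := by
          fun_prop
        have := hc.tendsto x
        simpa using this
      have := h0.add (tendsto_const_nhds (x := F x))
      simp only [sub_add_cancel, zero_add] at this; exact this
    have hXsm : AEStronglyMeasurable X ℙ := hX.aestronglyMeasurable
    have hXm2 : MemLp X 2 ℙ := (memLp_two_iff_integrable_sq_norm hXsm).mpr hX2
    obtain ⟨C, hC⟩ : ∃ C, ∀ ω, ‖Xh ω‖ ≤ C := by
      obtain ⟨C, hC⟩ := (hfin.image (fun x => ‖x‖)).bddAbove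
      exact ⟨C, fun ω => hC (mem_image_of_mem _ (mem_range_self ω))⟩
    have hXhm2 : MemLp Xh 2 ℙ :=
      MemLp.of_bound hXh.aestronglyMeasurable C (Filter.Eventually.of_forall hC)
    have hN2 : MemLp (fun ω => ‖X ω - Xh ω‖) 2 ℙ := (hXm2.sub hXhm2).norm
    have hθXsm : AEStronglyMeasurable (fun ω => θf (X ω)) ℙ :=
      hθcont.comp_aestronglyMeasurable hXsm
    have hθX2 : MemLp (fun ω => θf (X ω)) 2 ℙ := (memLp_two_iff_integrable_sq hθXsm).mpr hθL2
    obtain ⟨Cθ, hCθ⟩ : ∃ C, ∀ ω, ‖θf (Xh ω)‖ ≤ C := by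
      obtain ⟨C, hC⟩ := (hfin.image (fun x => ‖θf x‖)).bddAbove
      exact ⟨C, fun ω => hC (mem_image_of_mem _ (mem_range_self ω))⟩
    have hθXh2 : MemLp (fun ω => θf (Xh ω)) 2 ℙ :=
      MemLp.of_bound (hθcont.comp_aestronglyMeasurable hXh.aestronglyMeasurable) Cθ
        (Filter.Eventually.of_forall hCθ)
    -- product of two L² functions is integrable
    have hmul : ∀ {f g : Ω → ℝ}, MemLp f 2 ℙ → MemLp g 2 ℙ →
        Integrable (fun ω => f ω * g ω) ℙ := by
      intro f g hf hg
      have h : MemLp (g • f) 1 ℙ := hf.smul hg (r := 1)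
      have := memLp_one_iff_integrable.mp h
      exact (by simpa [smul_eq_mul, mul_comm] using this : Integrable (f * g) ℙ)
    -- Cauchy-Schwarz
    have hCS : ∀ {f g : Ω → ℝ}, MemLp f 2 ℙ → MemLp g 2 ℙ → (∀ ω, 0 ≤ f ω) → (∀ ω, 0 ≤ g ω) →
        ∫ ω, f ω * g ω ∂ℙ ≤ (∫ ω, f ω ^ 2 ∂ℙ) ^ ((1:ℝ)/2) * (∫ ω, g ω ^ 2 ∂ℙ) ^ ((1:ℝ)/2) := by
      intro f g hf hg hf0 hg0
      have h := integral_mul_le_Lp_mul_Lq_of_nonneg (μ := (ℙ : Measure Ω))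
        (p := 2) (q := 2) (by constructor <;> norm_num)
        (Filter.Eventually.of_forall hf0) (Filter.Eventually.of_forall hg0)
        (by simpa using hf) (by simpa using hg)
      simpa [Real.rpow_natCast] using h
    -- integrability of F ∘ X
    have hFXint : Integrable (fun ω => F (X ω)) ℙ := by
      have h1 : Integrable (fun ω => ‖X ω‖ * θf (X ω)) ℙ := hmul hXm2.norm hθX2
      have h2 : Integrable (fun ω => ‖X ω‖ * θf 0) ℙ :=
        ((hXm2.norm.integrable one_le_two).mul_const _)
      have hdom : Integrable (fun ω => |F 0| + L * (‖X ω‖ * (θf (X ω) + θf 0))) ℙ := by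
        refine (integrable_const _).add (Integrable.const_mul ?_ L)
        simpa [mul_add, Pi.add_def] using h1.add h2
      refine hdom.mono' (hFcont.comp_aestronglyMeasurable hXsm)
        (Filter.Eventually.of_forall fun ω => ?_)
      have h := hgrowth (X ω) 0
      rw [sub_zero] at h
      have htri : |F (X ω)| ≤ |F (X ω) - F 0| + |F 0| := by
        calc |F (X ω)| = |(F (X ω) - F 0) + F 0| := by ring_nf
          _ ≤ |F (X ω) - F 0| + |F 0| := abs_add_le _ _
      rw [Real.norm_eq_abs]
      nlinarith [h, htri]
    -- integrability of F ∘ Xh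
    have hFXhint : Integrable (fun ω => F (Xh ω)) ℙ := by
      obtain ⟨CF, hCF⟩ : ∃ C, ∀ ω, ‖F (Xh ω)‖ ≤ C := by
        obtain ⟨C, hC⟩ := (hfin.image (fun x => ‖F x‖)).bddAbove
        exact ⟨C, fun ω => hC (mem_image_of_mem _ (mem_range_self ω))⟩
      exact memLp_one_iff_integrable.mp
        (MemLp.of_bound (hFcont.comp_aestronglyMeasurable hXh.aestronglyMeasurable) CF
          (Filter.Eventually.of_forall hCF))
    refine ⟨hFXint, ?_⟩
    have hXint : Integrable X ℙ := hXm2.integrable one_le_two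
    have hθXint : Integrable (fun ω => θf (X ω)) ℙ := hθX2.integrable one_le_two
    -- per-atom Jensen inequality
    have hatom : ∀ a : EuclideanSpace ℝ (Fin d),
        (ℙ (Xh ⁻¹' {a})).toReal * (θf a)^2 ≤ ∫ ω in Xh ⁻¹' {a}, (θf (X ω))^2 ∂ℙ := by
      intro a
      have hm : MeasurableSpace.comap Xh inferInstance
          ≤ (MeasureSpace.toMeasurableSpace : MeasurableSpace Ω) := hXh.comap_le
      haveI : SigmaFinite ((ℙ : Measure Ω).trim hm) := by
        haveI := isFiniteMeasure_trim (μ := (ℙ : Measure Ω)) hm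
        infer_instance
      set A : Set Ω := Xh ⁻¹' {a} with hAdef
      have hAmm : MeasurableSet[MeasurableSpace.comap Xh inferInstance] A :=
        ⟨{a}, measurableSet_singleton a, rfl⟩
      have hAm : MeasurableSet A := hm A hAmm
      have h1 : ∫ ω in A, X ω ∂ℙ = (ℙ A).toReal • a := by
        rw [← setIntegral_condExp hm hXint hAmm,
          setIntegral_congr_ae hAm (hstat.mono fun ω hω _ => hω)]
        have : ∫ ω in A, Xh ω ∂ℙ = ∫ _ω in A, a ∂ℙ :=
          setIntegral_congr_fun hAm fun ω hω => hω
        rw [this, setIntegral_const]; rfl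
      by_cases hA0 : ℙ A = 0
      · have : ∫ ω in A, (θf (X ω))^2 ∂ℙ = 0 := by
          rw [Measure.restrict_eq_zero.mpr hA0, integral_zero_measure]
        rw [this, hA0]
        simp
      · haveI : NeZero ((ℙ : Measure Ω).restrict A) :=
          ⟨fun h => hA0 (Measure.restrict_eq_zero.mp h)⟩
        have htR : (ℙ A).toReal ≠ 0 :=
          ENNReal.toReal_ne_zero.mpr ⟨hA0, measure_ne_top _ _⟩
        have havg : ⨍ ω in A, X ω ∂ℙ = a := by
          rw [setAverage_eq, h1, smul_smul, measureReal_def, inv_mul_cancel₀ htR, one_smul]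
        have hj1 : θf a ≤ ⨍ ω in A, θf (X ω) ∂ℙ := by
          have := hθconv.map_average_le (μ := (ℙ : Measure Ω).restrict A)
            (hθcont.continuousOn) isClosed_univ
            (Filter.Eventually.of_forall fun ω => mem_univ _)
            (hXint.restrict) (hθXint.restrict)
          rwa [havg] at this
        have hj2 : (⨍ ω in A, θf (X ω) ∂ℙ)^2 ≤ ⨍ ω in A, (θf (X ω))^2 ∂ℙ := by
          have := (Even.convexOn_pow (even_two : Even 2)).map_average_le
            (μ := (ℙ : Measure Ω).restrict A) (f := fun ω => θf (X ω))
            ((continuous_pow 2).continuousOn) isClosed_univ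
            (Filter.Eventually.of_forall fun ω => mem_univ _)
            (hθXint.restrict) (by exact hθL2.restrict)
          exact this
        have hsq : (θf a)^2 ≤ ⨍ ω in A, (θf (X ω))^2 ∂ℙ :=
          le_trans (pow_le_pow_left₀ (hθnonneg a) hj1 2) hj2
        rw [setAverage_eq] at hsq
        calc (ℙ A).toReal * (θf a)^2
            ≤ (ℙ A).toReal * ((ℙ A).toReal⁻¹ • ∫ ω in A, (θf (X ω))^2 ∂ℙ) :=
              mul_le_mul_of_nonneg_left hsq ENNReal.toReal_nonneg
          _ = ∫ ω in A, (θf (X ω))^2 ∂ℙ := by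
              rw [smul_eq_mul, ← mul_assoc, mul_inv_cancel₀ htR, one_mul]
    -- key inequality: ∫ θ(Xh)² ≤ ∫ θ(X)²
    have hkey : ∫ ω, (θf (Xh ω))^2 ∂ℙ ≤ ∫ ω, (θf (X ω))^2 ∂ℙ := by
      set t := hfin.toFinset with htdef
      have hmeas : ∀ a ∈ t, MeasurableSet (Xh ⁻¹' {a}) :=
        fun a _ => hXh (measurableSet_singleton a)
      have hdisj : Set.Pairwise (↑t) (Function.onFun Disjoint fun a => Xh ⁻¹' {a}) := by
        intro a _ b _ hab
        exact Set.disjoint_left.mpr fun ω h1 h2 => hab (by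
          rw [← show Xh ω = a from h1, ← show Xh ω = b from h2])
      have hU : ⋃ a ∈ t, Xh ⁻¹' {a} = univ := by
        ext ω
        simp only [mem_iUnion, mem_univ, iff_true, mem_preimage, mem_singleton_iff]
        exact ⟨Xh ω, hfin.mem_toFinset.mpr (mem_range_self ω), rfl⟩
      have hint1 : Integrable (fun ω => (θf (Xh ω))^2) ℙ := hθXh2.integrable_sq
      have e1 : ∫ ω, (θf (Xh ω))^2 ∂ℙ = ∑ a ∈ t, ∫ ω in Xh ⁻¹' {a}, (θf (Xh ω))^2 ∂ℙ := by
        rw [← setIntegral_univ, ← hU,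
          integral_biUnion_finset t hmeas hdisj (fun a _ => hint1.integrableOn)]
      have e2 : ∫ ω, (θf (X ω))^2 ∂ℙ = ∑ a ∈ t, ∫ ω in Xh ⁻¹' {a}, (θf (X ω))^2 ∂ℙ := by
        rw [← setIntegral_univ, ← hU,
          integral_biUnion_finset t hmeas hdisj (fun a _ => hθL2.integrableOn)]
      rw [e1, e2]
      refine Finset.sum_le_sum fun a ha => ?_
      have hconst : ∫ ω in Xh ⁻¹' {a}, (θf (Xh ω))^2 ∂ℙ
          = (ℙ (Xh ⁻¹' {a})).toReal * (θf a)^2 := by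
        rw [setIntegral_congr_fun (hmeas a ha)
          (fun ω hω => by rw [show Xh ω = a from hω]), setIntegral_const, smul_eq_mul, measureReal_def]
      rw [hconst]
      exact hatom a
    -- main estimate
    set A := (∫ ω, ‖X ω - Xh ω‖^2 ∂ℙ) ^ ((1:ℝ)/2) with hAdef
    set B := (∫ ω, (θf (X ω))^2 ∂ℙ) ^ ((1:ℝ)/2) with hBdef
    set Cq := (∫ ω, (θf (Xh ω))^2 ∂ℙ) ^ ((1:ℝ)/2) with hCdef
    have hA0 : 0 ≤ A := Real.rpow_nonneg (integral_nonneg fun ω => sq_nonneg _) _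
    have hB0 : 0 ≤ B := Real.rpow_nonneg (integral_nonneg fun ω => sq_nonneg _) _
    have hC_le_B : Cq ≤ B :=
      Real.rpow_le_rpow (integral_nonneg fun ω => sq_nonneg _) hkey (by norm_num)
    have hCS1 : ∫ ω, ‖X ω - Xh ω‖ * θf (X ω) ∂ℙ ≤ A * B :=
      hCS hN2 hθX2 (fun ω => norm_nonneg _) (fun ω => hθnonneg _)
    have hCS2 : ∫ ω, ‖X ω - Xh ω‖ * θf (Xh ω) ∂ℙ ≤ A * Cq :=
      hCS hN2 hθXh2 (fun ω => norm_nonneg _) (fun ω => hθnonneg _)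
    have hint1 : Integrable (fun ω => ‖X ω - Xh ω‖ * θf (X ω)) ℙ := hmul hN2 hθX2
    have hint2 : Integrable (fun ω => ‖X ω - Xh ω‖ * θf (Xh ω)) ℙ := hmul hN2 hθXh2
    have habs : |(∫ ω, F (X ω) ∂ℙ) - ∫ ω, F (Xh ω) ∂ℙ|
        ≤ ∫ ω, L * (‖X ω - Xh ω‖ * (θf (X ω) + θf (Xh ω))) ∂ℙ := by
      rw [← integral_sub hFXint hFXhint]
      refine le_trans (by simpa [Real.norm_eq_abs] using
        norm_integral_le_integral_norm (fun ω => F (X ω) - F (Xh ω))) ?_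
      refine integral_mono (hFXint.sub hFXhint).abs
        (((hmul hN2 (hθX2.add hθXh2)).const_mul L)) fun ω => ?_
      simpa [Real.norm_eq_abs, mul_assoc] using hgrowth (X ω) (Xh ω)
    have hsplit : ∫ ω, L * (‖X ω - Xh ω‖ * (θf (X ω) + θf (Xh ω))) ∂ℙ
        = L * ((∫ ω, ‖X ω - Xh ω‖ * θf (X ω) ∂ℙ) + ∫ ω, ‖X ω - Xh ω‖ * θf (Xh ω) ∂ℙ) := by
      rw [integral_const_mul, ← integral_add hint1 hint2]
      congr 1
      refine integral_congr_ae (Filter.Eventually.of_forall fun ω => ?_)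
      ring
    calc |(∫ ω, F (X ω) ∂ℙ) - ∫ ω, F (Xh ω) ∂ℙ|
        ≤ L * ((∫ ω, ‖X ω - Xh ω‖ * θf (X ω) ∂ℙ) + ∫ ω, ‖X ω - Xh ω‖ * θf (Xh ω) ∂ℙ) := by
          rw [← hsplit]; exact habs
      _ ≤ L * (A * B + A * Cq) :=
          mul_le_mul_of_nonneg_left (add_le_add hCS1 hCS2) hL
      _ ≤ L * (A * B + A * B) := by
          have : A * Cq ≤ A * B := mul_le_mul_of_nonneg_left hC_le_B hA0
          nlinarith
      _ = 2 * L * A * B := by ring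
end
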